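/- arXiv:2204.09499 — 5 statements merged into one kernel-verified Lean document; each statement's English description precedes it below -/
import Mathlib

section
/- Let f : {0,1} → ℝ be a gamble and I = [p̲,p̄] ⊆ [0,1] an interval forecast. Then Ē_I(f) ≤ 0 if and only if there exist real numbers p ≤ p̲, q ≥ p̄ and α, β ≥ 0 such that f(x) = α·(p − x) + β·(x − q) for all x ∈ {0,1}. -/
open Filter Classical

/-- Situations: finite binary strings. -/
abbrev Situation := List Bool

/-- Paths: infinite binary sequences. -/
abbrev BinPath := ℕ → Bool

/-- The length-`n` prefix `ω_{1:n}` of a path. -/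
def pref (ω : BinPath) (n : ℕ) : Situation := List.ofFn (fun i : Fin n => ω i)

/-- The real value of a bit. -/
def bit (x : Bool) : ℝ := if x then 1 else 0

/-- Local expectation `E_p(f) = p f(1) + (1-p) f(0)` of a gamble `f : Bool → ℝ`. -/
def localE (p : ℝ) (f : Bool → ℝ) : ℝ := p * f true + (1 - p) * f false

/-- Upper expectation of a gamble for interval forecast `[lo, hi]`. -/
def upperE (lo hi : ℝ) (f : Bool → ℝ) : ℝ := max (localE lo f) (localE hi f)

/-- A forecasting system, given by lower and upper bounds `lo hi : Situation → ℝ`,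
is proper when `0 ≤ lo s ≤ hi s ≤ 1` everywhere. -/
def IsForecastingSystem (lo hi : Situation → ℝ) : Prop :=
  ∀ s, 0 ≤ lo s ∧ lo s ≤ hi s ∧ hi s ≤ 1

/-- The process difference `ΔF(s) : x ↦ F(s·x) − F(s)`. -/
def diffP (F : Situation → ℝ) (s : Situation) : Bool → ℝ := fun x => F (s ++ [x]) - F s

/-- A supermartingale for the forecasting system `(lo, hi)`. -/
def IsSupermartingale (lo hi : Situation → ℝ) (F : Situation → ℝ) : Prop :=
  ∀ s, upperE (lo s) (hi s) (diffP F s) ≤ 0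

/-- A test supermartingale: a nonnegative supermartingale starting at 1. -/
def IsTestSupermartingale (lo hi : Situation → ℝ) (F : Situation → ℝ) : Prop :=
  IsSupermartingale lo hi F ∧ (∀ s, 0 ≤ F s) ∧ F [] = 1

/-- A real process is (positive) rational-valued and recursive. -/
def IsRecursiveRational (F : Situation → ℝ) : Prop :=
  ∃ q : Situation → ℚ, Computable q ∧ ∀ s, (q s : ℝ) = F s

/-- A real process is computable. -/
def IsComputableProcess (F : Situation → ℝ) : Prop :=
  ∃ q : Situation → ℕ → ℚ, Computable₂ q ∧
    ∀ s n, |F s - q s n| < (2 : ℝ) ^ (-(n : ℤ))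

/-- A real process is lower semicomputable. -/
def IsLSCProcess (F : Situation → ℝ) : Prop :=
  ∃ q : Situation → ℕ → ℚ, Computable₂ q ∧
    (∀ s n, q s n ≤ q s (n + 1)) ∧
    ∀ s, Tendsto (fun m => (q s m : ℝ)) atTop (nhds (F s))

/-- A (real) growth function: computable, nonnegative, nondecreasing and unbounded. -/
def IsGrowthFunction (τ : ℕ → ℝ) : Prop :=
  (∀ n, 0 ≤ τ n) ∧ (∀ n, τ n ≤ τ (n + 1)) ∧ Tendsto τ atTop atTop ∧
    ∃ q : ℕ → ℕ → ℚ, Computable₂ q ∧ ∀ n m, |τ n - q n m| < (2 : ℝ) ^ (-(m : ℤ))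

/-- A real process is unbounded on a path: `limsup_n T(ω_{1:n}) = ∞`. -/
def UnboundedOn (T : Situation → ℝ) (ω : BinPath) : Prop :=
  limsup (fun n => ((T (pref ω n) : ℝ) : EReal)) atTop = ⊤

/-- A real process is computably unbounded on a path:
`limsup_n [T(ω_{1:n}) − τ(n)] ≥ 0` for some growth function `τ`. -/
def ComputablyUnboundedOn (T : Situation → ℝ) (ω : BinPath) : Prop :=
  ∃ τ : ℕ → ℝ, IsGrowthFunction τ ∧
    0 ≤ limsup (fun n => ((T (pref ω n) - τ n : ℝ) : EReal)) atTop

/-- Computable randomness for the forecasting system `(lo, hi)`: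
no recursive positive rational test supermartingale is unbounded on `ω`. -/
def CRandom (lo hi : Situation → ℝ) (ω : BinPath) : Prop :=
  ∀ T : Situation → ℝ, IsRecursiveRational T → (∀ s, 0 < T s) →
    IsTestSupermartingale lo hi T → ¬ UnboundedOn T ω

/-- Schnorr randomness for the forecasting system `(lo, hi)`:
no recursive positive rational test supermartingale is computably unbounded on `ω`. -/
def SchnorrRandom (lo hi : Situation → ℝ) (ω : BinPath) : Prop :=
  ∀ T : Situation → ℝ, IsRecursiveRational T → (∀ s, 0 < T s) →
    IsTestSupermartingale lo hi T → ¬ ComputablyUnboundedOn T ω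

/-- Martin-Löf randomness for the forecasting system `(lo, hi)`:
no lower semicomputable test supermartingale is unbounded on `ω`. -/
def MLRandom (lo hi : Situation → ℝ) (ω : BinPath) : Prop :=
  ∀ T : Situation → ℝ, IsLSCProcess T →
    IsTestSupermartingale lo hi T → ¬ UnboundedOn T ω

/-- A selection process is temporal if its value depends only on the length. -/
def IsTemporal (S : Situation → Bool) : Prop :=
  ∀ s t : Situation, s.length = t.length → S s = S t

/-- Value of a selection process along a path. -/
def selVal (S : Situation → Bool) (ω : BinPath) (k : ℕ) : ℝ := if S (pref ω k) then 1 else 0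

/-- `ω` is `𝒮`-random for the forecasting system `(lo, hi)`. -/
def SSetRandom (𝒮 : Set (Situation → Bool)) (lo hi : Situation → ℝ) (ω : BinPath) : Prop :=
  ∀ S ∈ 𝒮,
    Tendsto (fun n => ∑ k ∈ Finset.range n, selVal S ω k) atTop atTop →
      0 ≤ liminf (fun n =>
          (((∑ k ∈ Finset.range n, selVal S ω k * (bit (ω k) - lo (pref ω k))) /
              (∑ k ∈ Finset.range n, selVal S ω k) : ℝ) : EReal)) atTop ∧
        limsup (fun n =>
          (((∑ k ∈ Finset.range n, selVal S ω k * (bit (ω k) - hi (pref ω k))) /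
              (∑ k ∈ Finset.range n, selVal S ω k) : ℝ) : EReal)) atTop ≤ 0

/-- Weak Church randomness: the selection-process conditions hold for all
recursive temporal selection processes. -/
def WCHRandom (lo hi : Situation → ℝ) (ω : BinPath) : Prop :=
  SSetRandom {S | Computable S ∧ IsTemporal S} lo hi ω

/-- Global upper expectation of a bounded global gamble `f : BinPath → ℝ`. -/
noncomputable def globalUpperE (lo hi : Situation → ℝ) (f : BinPath → ℝ) : ℝ :=
  sInf {m : ℝ | ∃ M : Situation → ℝ, IsSupermartingale lo hi M ∧ M [] = m ∧
    ∀ ω : BinPath, (f ω : EReal) ≤ liminf (fun n => ((M (pref ω n) : ℝ) : EReal)) atTop}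

/-- Upper probability of an event. -/
noncomputable def upperProb (lo hi : Situation → ℝ) (A : Set BinPath) : ℝ :=
  globalUpperE lo hi (Set.indicator A 1)

/-- An event is almost sure if its complement has upper probability zero. -/
def AlmostSure (lo hi : Situation → ℝ) (A : Set BinPath) : Prop :=
  upperProb lo hi Aᶜ = 0

/-- The set of recursive positive rational test processes `𝓕_C`. -/
def FsetC : Set (Situation → ℝ) :=
  {F | IsRecursiveRational F ∧ (∀ s, 0 < F s) ∧ F [] = 1}

/-- The set of lower semicomputable test processes `𝓕_ML`. -/
def FsetML : Set (Situation → ℝ) :=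
  {F | IsLSCProcess F ∧ (∀ s, 0 ≤ F s) ∧ F [] = 1}

/-- The temporal selection process `S^r_F` associated with a real process `F`
and a number `r`. -/
noncomputable def selProc (r : ℝ) (F : Situation → ℝ) : Situation → Bool := fun s =>
  if ∃ t : Situation, t.length = s.length ∧ 0 < localE r (diffP F t) then true else false

/-- The set of selection processes `𝒮^{p,q}_𝓕`. -/
def SelSet (p q : ℝ) (𝓕 : Set (Situation → ℝ)) : Set (Situation → Bool) :=
  {S | ∃ F ∈ 𝓕, ∃ r ∈ ({p, q} : Set ℝ), S = selProc r F}

/-- The temporal precise forecasting system `φ^ϖ_{p,q}`. -/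
def tempFS (p q : ℝ) (ϖ : BinPath) : Situation → ℝ := fun s => if ϖ s.length then q else p

/-- A test process `F` is generated by the multiplier process `D`. -/
def GeneratedBy (D : Situation → Bool → ℝ) (F : Situation → ℝ) : Prop :=
  F [] = 1 ∧ ∀ s x, F (s ++ [x]) = F s * D s x

/-- A lower semicomputable multiplier process: a nonnegative gamble process that
is lower semicomputable. -/
def IsLSCMultiplier (D : Situation → Bool → ℝ) : Prop :=
  (∀ s x, 0 ≤ D s x) ∧
  ∃ q : Situation → Bool → ℕ → ℚ,
    Computable (fun p : Situation × Bool × ℕ => q p.1 p.2.1 p.2.2) ∧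
    (∀ s x n, q s x n ≤ q s x (n + 1)) ∧
    ∀ s x, Tendsto (fun m => (q s x m : ℝ)) atTop (nhds (D s x))

/-- `Ē_I(f) ≤ 0` iff `f` is of the form `α(p − X) + β(X − q)`
with `p ≤ p̲`, `q ≥ p̄` and `α, β ≥ 0`. -/
theorem statement_1 (f : Bool → ℝ) (plo phi : ℝ)
    (h0 : 0 ≤ plo) (hle : plo ≤ phi) (h1 : phi ≤ 1) :
    upperE plo phi f ≤ 0 ↔
      ∃ p q α β : ℝ, p ≤ plo ∧ phi ≤ q ∧ 0 ≤ α ∧ 0 ≤ β ∧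
        ∀ x : Bool, f x = α * (p - bit x) + β * (bit x - q) := by
  constructor
  · intro h
    simp only [upperE, localE, max_le_iff] at h
    obtain ⟨hlo, hhi⟩ := h
    set a := f false with ha
    set b := f true with hb
    rcases lt_trichotomy a b with hab | hab | hab
    · -- b > a : α = 0, β = b - a, p = plo, q = -a/(b-a)
      refine ⟨plo, -a / (b - a), 0, b - a, le_refl _, ?_, le_refl _, by linarith, ?_⟩
      · rw [le_div_iff₀ (by linarith)]
        nlinarith
      · have hne : b - a ≠ 0 := ne_of_gt (by linarith)
        intro x
        cases x <;> simp only [bit, if_true, if_false, Bool.false_eq_true, ← ha, ← hb] <;>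
          field_simp <;> ring
    · -- b = a : α = β = -a, p = plo, q = plo + 1
      refine ⟨plo, plo + 1, -a, -a, le_refl _, by linarith, by nlinarith, by nlinarith, ?_⟩
      intro x
      cases x <;> simp [bit] <;> nlinarith
    · -- b < a : α = a - b, β = 0, p = a/(a-b), q = 1
      refine ⟨a / (a - b), 1, a - b, 0, ?_, h1, by linarith, le_refl _, ?_⟩
      · rw [div_le_iff₀ (by linarith)]
        nlinarith
      · have hne : a - b ≠ 0 := ne_of_gt (by linarith)
        intro x
        cases x <;> simp only [bit, if_true, if_false, Bool.false_eq_true, ← ha, ← hb] <;>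
          field_simp <;> ring
  · rintro ⟨p, q, α, β, hp, hq, hα, hβ, hf⟩
    have ht := hf true
    have hfa := hf false
    simp [bit] at ht hfa
    simp only [upperE, localE, max_le_iff, ht, hfa]
    constructor <;> nlinarith
end

section
/- Let φ be a forecasting system and let (A_n)_{n∈ℕ₀} be a sequence of events, each almost sure for φ. Then the intersection ⋂_{n∈ℕ₀} A_n is almost sure for φ. -/
open Filter Classical

lemma step_ineq {lo hi : Situation → ℝ} {M : Situation → ℝ}
    (hM : IsSupermartingale lo hi M) (s : Situation)
    {p : ℝ} (hp : p = lo s ∨ p = hi s) :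
    p * M (s ++ [true]) + (1 - p) * M (s ++ [false]) ≤ M s := by
  have h := hM s
  rw [upperE, max_le_iff] at h
  rcases hp with rfl | rfl
  · have h1 := h.1; simp only [localE, diffP] at h1; nlinarith [h1]
  · have h2 := h.2; simp only [localE, diffP] at h2; nlinarith [h2]

lemma supermart_of_steps {lo hi : Situation → ℝ} {M : Situation → ℝ}
    (h : ∀ s, ∀ p, (p = lo s ∨ p = hi s) →
      p * M (s ++ [true]) + (1 - p) * M (s ++ [false]) ≤ M s) :
    IsSupermartingale lo hi M := by
  intro s
  rw [upperE, max_le_iff]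
  constructor
  · have := h s (lo s) (Or.inl rfl); simp only [localE, diffP]; nlinarith [this]
  · have := h s (hi s) (Or.inr rfl); simp only [localE, diffP]; nlinarith [this]

lemma supermart_nonneg {lo hi : Situation → ℝ} (hφ : IsForecastingSystem lo hi)
    {M : Situation → ℝ} (hM : IsSupermartingale lo hi M)
    {f : BinPath → ℝ} (hf : ∀ ω, 0 ≤ f ω)
    (hdom : ∀ ω : BinPath, (f ω : EReal) ≤ liminf (fun n => ((M (pref ω n) : ℝ) : EReal)) atTop)
    (s : Situation) : 0 ≤ M s := by
  classical
  set step : Situation → Situation := fun t =>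
    if M (t ++ [true]) ≤ M (t ++ [false]) then t ++ [true] else t ++ [false] with hstep
  set E : ℕ → Situation := fun n => step^[n] s with hE
  have hE0 : E 0 = s := rfl
  have hEsucc : ∀ n, E (n+1) = step (E n) := fun n => Function.iterate_succ_apply' step n s
  have hstep_app : ∀ t, ∃ x : Bool, step t = t ++ [x] := by
    intro t
    by_cases hc : M (t ++ [true]) ≤ M (t ++ [false])
    · exact ⟨true, by simp [hstep, if_pos hc]⟩
    · exact ⟨false, by simp [hstep, if_neg hc]⟩
  have hmin : ∀ t, M (step t) ≤ M t := by
    intro t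
    have h := step_ineq hM t (Or.inl rfl)
    have hp := hφ t
    by_cases hc : M (t ++ [true]) ≤ M (t ++ [false])
    · simp only [hstep, if_pos hc]
      nlinarith [mul_nonneg (by linarith [hp.2.1, hp.2.2] : (0:ℝ) ≤ 1 - lo t)
        (sub_nonneg.mpr hc)]
    · push_neg at hc
      simp only [hstep, if_neg (not_le.mpr hc)]
      nlinarith [mul_nonneg hp.1 (sub_nonneg.mpr hc.le)]
  have hlen : ∀ n, (E n).length = s.length + n := by
    intro n
    induction n with
    | zero => simp [hE0]
    | succ k ih =>
      obtain ⟨x, hx⟩ := hstep_app (E k)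
      rw [hEsucc, hx]
      simp [ih]; ring
  have hprefsucc : ∀ n, E n <+: E (n+1) := by
    intro n
    obtain ⟨x, hx⟩ := hstep_app (E n)
    rw [hEsucc, hx]
    exact ⟨[x], rfl⟩
  have hchain : ∀ m n, m ≤ n → E m <+: E n := by
    intro m n hmn
    induction n with
    | zero => simp_all
    | succ k ih =>
      rcases Nat.lt_or_ge m (k+1) with h | h
      · exact (ih (Nat.lt_succ_iff.mp h)).trans (hprefsucc k)
      · have : m = k + 1 := le_antisymm hmn h
        subst this; exact List.prefix_refl _
  have hMle : ∀ n, M (E n) ≤ M s := by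
    intro n
    induction n with
    | zero => simp [hE0]
    | succ k ih => exact le_trans (by rw [hEsucc]; exact hmin (E k)) ih
  set ω : BinPath := fun k => (E (k+1)).getD k false with hω
  have hωget : ∀ k (h : k < (E (k+1)).length), ω k = (E (k+1))[k] := by
    intro k h
    simp [hω, List.getD_eq_getElem?_getD, List.getElem?_eq_getElem h]
  have hpref : ∀ n, pref ω (s.length + n) = E n := by
    intro n
    apply List.ext_getElem
    · simp [pref, hlen]
    · intro i h1 h2
      have hip1 : i < (E (i+1)).length := by rw [hlen]; omega
      have hωi : ω i = (E (i+1))[i] := hωget i hip1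
      have hiEn : i < (E n).length := h2
      have : (E (i+1))[i]'hip1 = (E n)[i]'hiEn := by
        rcases Nat.le_total (i+1) n with h | h
        · exact (hchain _ _ h).getElem hip1
        · exact ((hchain _ _ h).getElem hiEn).symm
      simp only [pref, List.getElem_ofFn]
      rw [hωi, this]
  have hle : ∀ᶠ n in atTop, ((M (pref ω n) : ℝ) : EReal) ≤ ((M s : ℝ) : EReal) := by
    filter_upwards [eventually_ge_atTop s.length] with n hn
    have h1 : pref ω n = E (n - s.length) := by
      have := hpref (n - s.length)
      rwa [Nat.add_sub_cancel' hn] at this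
    rw [h1]
    exact_mod_cast hMle _
  have h1 : liminf (fun n => ((M (pref ω n) : ℝ) : EReal)) atTop ≤ ((M s : ℝ) : EReal) := by
    calc liminf (fun n => ((M (pref ω n) : ℝ) : EReal)) atTop
        ≤ liminf (fun _ : ℕ => ((M s : ℝ) : EReal)) atTop := liminf_le_liminf hle
      _ = ((M s : ℝ) : EReal) := liminf_const _
  have h0 : ((0 : ℝ) : EReal) ≤ liminf (fun n => ((M (pref ω n) : ℝ) : EReal)) atTop :=
    le_trans (by exact_mod_cast hf ω) (hdom ω)
  exact_mod_cast le_trans h0 h1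

lemma const_one_mem {lo hi : Situation → ℝ} (g : BinPath → ℝ) (hg : ∀ ω, g ω ≤ 1) :
    (1:ℝ) ∈ {m : ℝ | ∃ M : Situation → ℝ, IsSupermartingale lo hi M ∧ M [] = m ∧
      ∀ ω : BinPath, (g ω : EReal) ≤ liminf (fun n => ((M (pref ω n) : ℝ) : EReal)) atTop} := by
  refine ⟨fun _ => 1, ?_, rfl, ?_⟩
  · intro s; simp [upperE, localE, diffP]
  · intro ω
    have : liminf (fun n : ℕ => (((1:ℝ) : ℝ) : EReal)) atTop = ((1:ℝ) : EReal) :=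
      liminf_const _
    rw [this]
    exact_mod_cast hg ω

lemma indic_nonneg (B : Set BinPath) (ω : BinPath) : (0:ℝ) ≤ Set.indicator B (1 : BinPath → ℝ) ω :=
  Set.indicator_nonneg (fun a _ => by norm_num) ω

lemma indic_le_one (B : Set BinPath) (ω : BinPath) : Set.indicator B (1 : BinPath → ℝ) ω ≤ 1 := by
  by_cases h : ω ∈ B
  · rw [Set.indicator_of_mem h]; norm_num
  · rw [Set.indicator_of_notMem h]; norm_num

/-- a countable intersection of almost sure events is almost sure. -/
theorem statement_9 (lo hi : Situation → ℝ) (hφ : IsForecastingSystem lo hi)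
    (A : ℕ → Set BinPath) (hA : ∀ n, AlmostSure lo hi (A n)) :
    AlmostSure lo hi (⋂ n, A n) := by
  classical
  unfold AlmostSure upperProb globalUpperE at hA ⊢
  set S : Set ℝ := {m : ℝ | ∃ M : Situation → ℝ, IsSupermartingale lo hi M ∧ M [] = m ∧
    ∀ ω : BinPath, ((Set.indicator (⋂ n, A n)ᶜ 1 ω : ℝ) : EReal) ≤
      liminf (fun n => ((M (pref ω n) : ℝ) : EReal)) atTop} with hS
  have hSbdd : BddBelow S := by
    refine ⟨0, fun m hm => ?_⟩
    obtain ⟨M, hM, h0, hd⟩ := hm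
    exact h0 ▸ supermart_nonneg hφ hM (indic_nonneg _) hd []
  have hSne : S.Nonempty := ⟨1, const_one_mem _ (indic_le_one _)⟩
  have key : ∀ ε : ℝ, 0 < ε → ∃ m ∈ S, m ≤ ε := by
    intro ε hε
    -- extract small supermartingales for each n
    have hchoice : ∀ n : ℕ, ∃ M : Situation → ℝ, IsSupermartingale lo hi M ∧
        M [] < ε / 2 ^ (n+1) ∧
        ∀ ω : BinPath, ((Set.indicator (A n)ᶜ 1 ω : ℝ) : EReal) ≤
          liminf (fun k => ((M (pref ω k) : ℝ) : EReal)) atTop := by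
      intro n
      have hbdd : BddBelow {m : ℝ | ∃ M : Situation → ℝ, IsSupermartingale lo hi M ∧ M [] = m ∧
          ∀ ω : BinPath, ((Set.indicator (A n)ᶜ 1 ω : ℝ) : EReal) ≤
            liminf (fun k => ((M (pref ω k) : ℝ) : EReal)) atTop} := by
        refine ⟨0, fun m hm => ?_⟩
        obtain ⟨M, hM, h0, hd⟩ := hm
        exact h0 ▸ supermart_nonneg hφ hM (indic_nonneg _) hd []
      have hne : Set.Nonempty {m : ℝ | ∃ M : Situation → ℝ, IsSupermartingale lo hi M ∧ M [] = m ∧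
          ∀ ω : BinPath, ((Set.indicator (A n)ᶜ 1 ω : ℝ) : EReal) ≤
            liminf (fun k => ((M (pref ω k) : ℝ) : EReal)) atTop} :=
        ⟨1, const_one_mem _ (indic_le_one _)⟩
      have hlt : sInf {m : ℝ | ∃ M : Situation → ℝ, IsSupermartingale lo hi M ∧ M [] = m ∧
          ∀ ω : BinPath, ((Set.indicator (A n)ᶜ 1 ω : ℝ) : EReal) ≤
            liminf (fun k => ((M (pref ω k) : ℝ) : EReal)) atTop} < ε / 2 ^ (n+1) := by
        rw [hA n]; positivity
      obtain ⟨m, ⟨M, hM, h0, hd⟩, hmlt⟩ := (csInf_lt_iff hbdd hne).mp hlt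
      exact ⟨M, hM, h0 ▸ hmlt, hd⟩
    choose Ms hMsuper hMinit hMdom using hchoice
    have hMnonneg : ∀ n t, 0 ≤ Ms n t := fun n =>
      supermart_nonneg hφ (hMsuper n) (indic_nonneg _) (hMdom n)
    set P : ℕ → Situation → ℝ := fun N t => ∑ n ∈ Finset.range N, Ms n t with hP
    set g : Situation → ℕ → ℝ := fun t N => min (P N t) 2 with hg
    have hmono : ∀ t, Monotone (g t) := by
      intro t N₁ N₂ h
      apply min_le_min _ le_rfl
      exact Finset.sum_le_sum_of_subset_of_nonneg (Finset.range_subset_range.mpr h)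
        (fun i _ _ => hMnonneg i t)
    have hbddA : ∀ t, BddAbove (Set.range (g t)) := by
      intro t
      exact ⟨2, fun x ⟨N, hN⟩ => hN ▸ min_le_right _ _⟩
    set Q : Situation → ℝ := fun t => ⨆ N, g t N with hQ
    have hQge : ∀ t N, g t N ≤ Q t := fun t N => le_ciSup (hbddA t) N
    have hQ0 : ∀ t, 0 ≤ Q t := by
      intro t
      refine le_trans ?_ (hQge t 0)
      simp [hg, hP]
    have htend : ∀ t, Tendsto (g t) atTop (nhds (Q t)) :=
      fun t => tendsto_atTop_ciSup (hmono t) (hbddA t)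
    have hQsuper : IsSupermartingale lo hi Q := by
      apply supermart_of_steps
      intro s p hp
      have hp01 : 0 ≤ p ∧ p ≤ 1 := by
        obtain ⟨h1, h2, h3⟩ := hφ s
        rcases hp with rfl | rfl
        · exact ⟨h1, le_trans h2 h3⟩
        · exact ⟨le_trans h1 h2, h3⟩
      have hstepN : ∀ N, p * g (s ++ [true]) N + (1 - p) * g (s ++ [false]) N ≤ Q s := by
        intro N
        refine le_trans (le_min ?_ ?_) (hQge s N)
        · have hPstep : p * P N (s ++ [true]) + (1 - p) * P N (s ++ [false]) ≤ P N s := by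
            simp only [hP, Finset.mul_sum, ← Finset.sum_add_distrib]
            exact Finset.sum_le_sum fun n _ => step_ineq (hMsuper n) s hp
          refine le_trans ?_ hPstep
          have := min_le_left (P N (s ++ [true])) 2
          have := min_le_left (P N (s ++ [false])) 2
          have h1p : (0:ℝ) ≤ 1 - p := by linarith [hp01.2]
          nlinarith [mul_le_mul_of_nonneg_left (min_le_left (P N (s ++ [true])) 2) hp01.1,
            mul_le_mul_of_nonneg_left (min_le_left (P N (s ++ [false])) 2) h1p]
        · have h1 : g (s ++ [true]) N ≤ 2 := min_le_right _ _
          have h2 : g (s ++ [false]) N ≤ 2 := min_le_right _ _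
          have h1p : (0:ℝ) ≤ 1 - p := by linarith [hp01.2]
          nlinarith [mul_le_mul_of_nonneg_left h1 hp01.1,
            mul_le_mul_of_nonneg_left h2 h1p]
      have t1 : Tendsto (fun N => p * g (s ++ [true]) N + (1 - p) * g (s ++ [false]) N)
          atTop (nhds (p * Q (s ++ [true]) + (1 - p) * Q (s ++ [false]))) :=
        ((htend _).const_mul p).add ((htend _).const_mul (1 - p))
      exact le_of_tendsto t1 (Eventually.of_forall hstepN)
    have hQdom : ∀ ω : BinPath, ((Set.indicator (⋂ n, A n)ᶜ 1 ω : ℝ) : EReal) ≤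
        liminf (fun k => ((Q (pref ω k) : ℝ) : EReal)) atTop := by
      intro ω
      by_cases hω : ω ∈ (⋂ n, A n)ᶜ
      · rw [Set.indicator_of_mem hω]
        obtain ⟨n, hn⟩ : ∃ n, ω ∉ A n := by simpa [Set.mem_iInter] using hω
        have h1 : ((1:ℝ) : EReal) ≤ liminf (fun k => ((Ms n (pref ω k) : ℝ) : EReal)) atTop := by
          have := hMdom n ω
          rwa [Set.indicator_of_mem (by simpa using hn)] at this
        have h2 : ((1:ℝ) : EReal) ≤
            liminf (fun k => ((min (Ms n (pref ω k)) 2 : ℝ) : EReal)) atTop := by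
          rw [le_liminf_iff] at h1 ⊢
          intro y hy
          filter_upwards [h1 y hy] with k hk
          have hcoe : ((min (Ms n (pref ω k)) 2 : ℝ) : EReal) =
              min ((Ms n (pref ω k) : ℝ) : EReal) ((2:ℝ) : EReal) :=
            EReal.coe_strictMono.monotone.map_min
          rw [hcoe, lt_min_iff]
          refine ⟨hk, lt_of_lt_of_le hy ?_⟩
          exact_mod_cast (by norm_num : (1:ℝ) ≤ 2)
        refine le_trans h2 (liminf_le_liminf (Eventually.of_forall fun k => ?_))
        have hsum : Ms n (pref ω k) ≤ P (n+1) (pref ω k) :=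
          Finset.single_le_sum (fun i _ => hMnonneg i (pref ω k))
            (Finset.self_mem_range_succ n)
        have : min (Ms n (pref ω k)) 2 ≤ Q (pref ω k) :=
          le_trans (min_le_min hsum le_rfl) (hQge _ (n+1))
        exact_mod_cast this
      · rw [Set.indicator_of_notMem hω]
        have : liminf (fun k : ℕ => (((0:ℝ) : ℝ) : EReal)) atTop = ((0:ℝ) : EReal) :=
          liminf_const _
        push_cast
        calc (0 : EReal) = liminf (fun k : ℕ => (0 : EReal)) atTop := (liminf_const _).symm
          _ ≤ liminf (fun k => ((Q (pref ω k) : ℝ) : EReal)) atTop :=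
            liminf_le_liminf (Eventually.of_forall fun k => by exact_mod_cast hQ0 (pref ω k))
    have hQinit : Q [] ≤ ε := by
      apply ciSup_le
      intro N
      have h1 : g [] N ≤ P N [] := min_le_left _ _
      have h2 : P N [] ≤ ∑ n ∈ Finset.range N, ε / 2 ^ (n+1) :=
        Finset.sum_le_sum fun n _ => (hMinit n).le
      have h3 : ∑ n ∈ Finset.range N, ε / 2 ^ (n+1) ≤ ε := by
        have heq : ∀ n : ℕ, ε / 2 ^ (n+1) = ε / 2 * (1/2) ^ n := by
          intro n; rw [pow_succ]; ring_nf; norm_num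
        calc ∑ n ∈ Finset.range N, ε / 2 ^ (n+1)
            = ε / 2 * ∑ n ∈ Finset.range N, (1/2:ℝ) ^ n := by
              rw [Finset.mul_sum]; exact Finset.sum_congr rfl fun n _ => heq n
          _ ≤ ε / 2 * 2 := by
              apply mul_le_mul_of_nonneg_left (sum_geometric_two_le N) (by positivity)
          _ = ε := by ring
      linarith
    exact ⟨Q [], ⟨Q, hQsuper, rfl, hQdom⟩, hQinit⟩
  apply le_antisymm
  · refine le_of_forall_pos_le_add fun ε hε => ?_
    obtain ⟨m, hm, hmε⟩ := key ε hε
    calc sInf S ≤ m := csInf_le hSbdd hm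
      _ ≤ 0 + ε := by linarith
  · refine le_csInf hSne fun m hm => ?_
    obtain ⟨M, hM, h0, hd⟩ := hm
    exact h0 ▸ supermart_nonneg hφ hM (indic_nonneg _) hd []
end

section
/- Let φ be a forecasting system and let 𝒮 be a countable set of selection processes. Then the event { ω ∈ Ω : ω is 𝒮-random for φ } is almost sure for φ. -/
open Filter Classical

lemma pref_length (ω : BinPath) (n : ℕ) : (pref ω n).length = n := by simp [pref]

lemma pref_take (ω : BinPath) {k n : ℕ} (h : k ≤ n) : (pref ω n).take k = pref ω k := by
  apply List.ext_getElem
  · simp [pref]; omega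
  · intro i h1 h2
    simp [pref, List.getElem_take]

lemma pref_getD (ω : BinPath) {k n : ℕ} (h : k < n) : (pref ω n).getD k false = ω k := by
  rw [List.getD_eq_getElem?_getD]
  simp [pref, h]

lemma pref_succ (ω : BinPath) (n : ℕ) : pref ω (n + 1) = pref ω n ++ [ω n] := by
  rw [pref, List.ofFn_succ']
  simp [pref, List.concat_eq_append]
/-- Product process from a multiplier `d`. -/
noncomputable def prodF (d : Situation → Bool → ℝ) (s : Situation) : ℝ :=
  ∏ k ∈ Finset.range s.length, d (s.take k) (s.getD k false)

lemma prodF_nil (d : Situation → Bool → ℝ) : prodF d [] = 1 := by simp [prodF]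

lemma prodF_append (d : Situation → Bool → ℝ) (s : Situation) (x : Bool) :
    prodF d (s ++ [x]) = prodF d s * d s x := by
  unfold prodF
  rw [List.length_append, List.length_singleton, Finset.prod_range_succ]
  congr 1
  · apply Finset.prod_congr rfl
    intro k hk
    rw [Finset.mem_range] at hk
    congr 1
    · exact List.take_append_of_le_length (le_of_lt hk)
    · rw [List.getD_eq_getElem?_getD, List.getD_eq_getElem?_getD, List.getElem?_append_left hk]
  · congr 1
    · simp
    · rw [List.getD_eq_getElem?_getD]
      simp

lemma prodF_pref (d : Situation → Bool → ℝ) (ω : BinPath) (n : ℕ) :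
    prodF d (pref ω n) = ∏ k ∈ Finset.range n, d (pref ω k) (ω k) := by
  unfold prodF
  rw [pref_length]
  apply Finset.prod_congr rfl
  intro k hk
  rw [Finset.mem_range] at hk
  rw [pref_take ω (le_of_lt hk), pref_getD ω hk]

lemma prodF_pos {d : Situation → Bool → ℝ} (hd : ∀ s x, 0 < d s x) (s : Situation) :
    0 < prodF d s :=
  Finset.prod_pos fun _ _ => hd _ _

lemma prodF_le {d : Situation → Bool → ℝ} (hd0 : ∀ s x, 0 ≤ d s x)
    (hd : ∀ s x, d s x ≤ 3/2) (s : Situation) : prodF d s ≤ (3/2) ^ s.length := by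
  calc prodF d s ≤ ∏ _k ∈ Finset.range s.length, (3/2 : ℝ) :=
        Finset.prod_le_prod (fun _ _ => hd0 _ _) (fun _ _ => hd _ _)
    _ = (3/2) ^ s.length := by rw [Finset.prod_const, Finset.card_range]

lemma localE_const_add_mul (p c : ℝ) (g : Bool → ℝ) :
    localE p (fun x => 1 + c * g x) = 1 + c * localE p g := by
  simp [localE]; ring

lemma prodF_supermartingale {lo hi : Situation → ℝ} {d : Situation → Bool → ℝ}
    (hd0 : ∀ s x, 0 ≤ d s x)
    (hlo : ∀ s, localE (lo s) (d s) ≤ 1) (hhi : ∀ s, localE (hi s) (d s) ≤ 1) :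
    IsSupermartingale lo hi (prodF d) := by
  intro s
  have hpos : 0 ≤ prodF d s := Finset.prod_nonneg fun _ _ => hd0 _ _
  have key : ∀ p : ℝ, localE p (d s) ≤ 1 → localE p (diffP (prodF d) s) ≤ 0 := by
    intro p hp
    have : localE p (diffP (prodF d) s) = prodF d s * (localE p (d s) - 1) := by
      simp [localE, diffP, prodF_append]; ring
    rw [this]
    exact mul_nonpos_of_nonneg_of_nonpos hpos (by linarith)
  exact max_le (key _ (hlo s)) (key _ (hhi s))
/-- Stopped process: freeze `F` at the first prefix where it reaches `c`. -/
noncomputable def stopP (F : Situation → ℝ) (c : ℝ) (s : Situation) : ℝ :=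
  if h : ∃ k, k ≤ s.length ∧ c ≤ F (s.take k) then F (s.take (Nat.find h)) else F s

lemma stopP_nil (F : Situation → ℝ) (c : ℝ) : stopP F c [] = F [] := by
  unfold stopP
  split <;> simp

lemma stopP_of_hit {F : Situation → ℝ} {c : ℝ} {s : Situation}
    (h : ∃ k, k ≤ s.length ∧ c ≤ F (s.take k)) : c ≤ stopP F c s := by
  unfold stopP
  rw [dif_pos h]
  exact (Nat.find_spec h).2

lemma stopP_append (F : Situation → ℝ) (c : ℝ) (s : Situation) (x : Bool) :
    stopP F c (s ++ [x]) =
      if ∃ k, k ≤ s.length ∧ c ≤ F (s.take k) then stopP F c s else F (s ++ [x]) := by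
  have hlen : (s ++ [x]).length = s.length + 1 := by simp
  have htake : ∀ k, k ≤ s.length → (s ++ [x]).take k = s.take k := fun k hk =>
    List.take_append_of_le_length hk
  by_cases h : ∃ k, k ≤ s.length ∧ c ≤ F (s.take k)
  · rw [if_pos h]
    have h' : ∃ k, k ≤ (s ++ [x]).length ∧ c ≤ F ((s ++ [x]).take k) := by
      obtain ⟨k, hk1, hk2⟩ := h
      exact ⟨k, by omega, by rwa [htake k hk1]⟩
    unfold stopP
    rw [dif_pos h', dif_pos h]
    have h1 : Nat.find h' = Nat.find h := by
      apply le_antisymm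
      · apply Nat.find_le
        obtain ⟨hk1, hk2⟩ := Nat.find_spec h
        exact ⟨by omega, by rwa [htake _ hk1]⟩
      · apply Nat.find_le
        obtain ⟨hk1, hk2⟩ := Nat.find_spec h'
        have hle : Nat.find h' ≤ s.length := by
          obtain ⟨k, hk1', hk2'⟩ := h
          have hkk : Nat.find h' ≤ k := Nat.find_le ⟨by omega, by rwa [htake k hk1']⟩
          omega
        rw [htake _ hle] at hk2
        exact ⟨hle, hk2⟩
    rw [h1, htake _ (Nat.find_spec h).1]
  · rw [if_neg h]
    unfold stopP
    by_cases h' : ∃ k, k ≤ (s ++ [x]).length ∧ c ≤ F ((s ++ [x]).take k)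
    · rw [dif_pos h']
      have hfind : Nat.find h' = s.length + 1 := by
        have h2 := Nat.find_spec h'
        have hle : Nat.find h' ≤ s.length + 1 := by
          have := h2.1; omega
        rcases Nat.lt_or_ge (Nat.find h') (s.length + 1) with hlt | hge
        · exfalso
          apply h
          exact ⟨Nat.find h', by omega, by rw [← htake _ (by omega)]; exact h2.2⟩
        · omega
      rw [hfind]
      congr 1
      rw [← hlen, List.take_length]
    · rw [dif_neg h']
lemma stopP_supermartingale {lo hi : Situation → ℝ} {F : Situation → ℝ} {c : ℝ}
    (hF : IsSupermartingale lo hi F) : IsSupermartingale lo hi (stopP F c) := by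
  intro s
  by_cases h : ∃ k, k ≤ s.length ∧ c ≤ F (s.take k)
  · have hd : diffP (stopP F c) s = fun _ => 0 := by
      funext x
      simp [diffP, stopP_append, if_pos h]
    rw [hd]
    simp [upperE, localE]
  · have hs : stopP F c s = F s := by
      unfold stopP; rw [dif_neg h]
    have hd : diffP (stopP F c) s = diffP F s := by
      funext x
      simp [diffP, stopP_append, if_neg h, hs]
    rw [hd]
    exact hF s

lemma stopP_eq_prefix (F : Situation → ℝ) (c : ℝ) (s : Situation) :
    ∃ k ≤ s.length, stopP F c s = F (s.take k) := by
  unfold stopP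
  split
  · next h => exact ⟨Nat.find h, (Nat.find_spec h).1, rfl⟩
  · exact ⟨s.length, le_refl _, by rw [List.take_length]⟩

lemma stopP_nonneg {F : Situation → ℝ} (hF : ∀ s, 0 ≤ F s) (c : ℝ) (s : Situation) :
    0 ≤ stopP F c s := by
  obtain ⟨k, _, hk⟩ := stopP_eq_prefix F c s
  rw [hk]; exact hF _

lemma stopP_le {F : Situation → ℝ} (hF : ∀ s, F s ≤ (3/2) ^ s.length) (c : ℝ) (s : Situation) :
    stopP F c s ≤ (3/2) ^ s.length := by
  obtain ⟨k, hk1, hk⟩ := stopP_eq_prefix F c s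
  rw [hk]
  calc F (s.take k) ≤ (3/2 : ℝ) ^ (s.take k).length := hF _
    _ ≤ (3/2) ^ s.length := by
        apply pow_le_pow_right₀ (by norm_num)
        rw [List.length_take]; omega

lemma stopP_pref_ge {F : Situation → ℝ} {c : ℝ} {ω : BinPath} {n : ℕ}
    (h : c ≤ F (pref ω n)) : ∀ m, n ≤ m → c ≤ stopP F c (pref ω m) := by
  intro m hm
  apply stopP_of_hit
  exact ⟨n, by rw [pref_length]; omega, by rwa [pref_take ω hm]⟩
lemma exp_quad_le {u : ℝ} (h : |u| ≤ 1/2) : Real.exp (u - 2*u^2) ≤ 1 + u := by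
  rw [abs_le] at h
  obtain ⟨h1, h2⟩ := h
  set t := u - 2*u^2 with ht
  have ht1 : t < 1 := by nlinarith [sq_nonneg (2*u - 1/2)]
  have key := Real.add_one_le_exp (-t)
  rw [Real.exp_neg] at key
  have hexp : 0 < Real.exp t := Real.exp_pos t
  have h3 : Real.exp t * (1 - t) ≤ 1 := by
    have := mul_le_mul_of_nonneg_left key (le_of_lt hexp)
    rw [mul_inv_cancel₀ (ne_of_gt hexp)] at this
    linarith [this]
  have h4 : (1:ℝ) ≤ (1 + u) * (1 - t) := by nlinarith [sq_nonneg u]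
  have h5 : Real.exp t * (1 - t) ≤ (1 + u) * (1 - t) := le_trans h3 h4
  exact le_of_mul_le_mul_right h5 (by linarith)

lemma prodF_unbounded (S : Situation → Bool) (g : Situation → Bool → ℝ)
    (hg : ∀ s x, |g s x| ≤ 1) {ε : ℝ} (hε0 : 0 < ε) (hε1 : ε ≤ 1) (ω : BinPath)
    (hN : Tendsto (fun n => ∑ k ∈ Finset.range n, selVal S ω k) atTop atTop)
    (hfreq : ∃ᶠ n in atTop, ε * (∑ k ∈ Finset.range n, selVal S ω k) ≤
      ∑ k ∈ Finset.range n, selVal S ω k * g (pref ω k) (ω k))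
    (c : ℝ) :
    ∃ n, c ≤ prodF (fun s x => 1 + (ε/4) * (if S s then 1 else 0) * g s x) (pref ω n) := by
  set δ : ℝ := ε^2/8 with hδ
  have hδ0 : 0 < δ := by positivity
  obtain ⟨n, hn1, hn2⟩ :=
    (hfreq.and_eventually (hN.eventually_ge_atTop (Real.log (max c 1) / δ))).exists
  refine ⟨n, ?_⟩
  set N := ∑ k ∈ Finset.range n, selVal S ω k with hNdef
  set u : ℕ → ℝ := fun k => (ε/4) * (if S (pref ω k) then 1 else 0) * g (pref ω k) (ω k) with hu
  have hsel : ∀ k, selVal S ω k = if S (pref ω k) then (1:ℝ) else 0 := fun k => rfl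
  have huabs : ∀ k, |u k| ≤ 1/2 := by
    intro k
    rw [hu]
    simp only
    rw [abs_mul, abs_mul]
    have h1 : |ε/4| ≤ 1/4 := by rw [abs_of_nonneg (by linarith)]; linarith
    have h2 : |if S (pref ω k) then (1:ℝ) else 0| ≤ 1 := by split <;> simp
    have h3 := hg (pref ω k) (ω k)
    have h4 := mul_le_mul (mul_le_mul h1 h2 (abs_nonneg _) (by norm_num)) h3
      (abs_nonneg _) (by norm_num)
    linarith
  -- product form
  rw [prodF_pref]
  have hprod : ∀ k ∈ Finset.range n,
      Real.exp (u k - 2*(u k)^2) ≤ 1 + (ε/4) * (if S (pref ω k) then 1 else 0) * g (pref ω k) (ω k) :=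
    fun k _ => exp_quad_le (huabs k)
  have hchain : Real.exp (∑ k ∈ Finset.range n, (u k - 2*(u k)^2)) ≤
      ∏ k ∈ Finset.range n, (1 + (ε/4) * (if S (pref ω k) then 1 else 0) * g (pref ω k) (ω k)) := by
    rw [Real.exp_sum]
    exact Finset.prod_le_prod (fun k _ => (Real.exp_pos _).le) hprod
  -- lower bound the exponent
  have hsum1 : (ε/4) * (ε * N) ≤ ∑ k ∈ Finset.range n, u k := by
    have : ∑ k ∈ Finset.range n, u k =
        (ε/4) * ∑ k ∈ Finset.range n, selVal S ω k * g (pref ω k) (ω k) := by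
      rw [Finset.mul_sum]
      apply Finset.sum_congr rfl
      intro k _
      rw [hsel k, hu]; ring
    rw [this]
    apply mul_le_mul_of_nonneg_left hn1 (by linarith)
  have hsum2 : ∑ k ∈ Finset.range n, (u k)^2 ≤ (ε/4)^2 * N := by
    rw [hNdef, Finset.mul_sum]
    apply Finset.sum_le_sum
    intro k _
    rw [hu, hsel k]
    simp only
    split
    · have h3 := hg (pref ω k) (ω k)
      rw [abs_le] at h3
      have hg2 : (g (pref ω k) (ω k))^2 ≤ 1 := by nlinarith [h3.1, h3.2]
      have h5 := mul_le_mul_of_nonneg_left hg2 (sq_nonneg (ε/4))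
      nlinarith [h5]
    · simp
  have hexp_ge : Real.log (max c 1) ≤ ∑ k ∈ Finset.range n, (u k - 2*(u k)^2) := by
    have hNn : Real.log (max c 1) ≤ δ * N := by
      rw [div_le_iff₀ hδ0] at hn2
      linarith [hn2]
    have : δ * N ≤ ∑ k ∈ Finset.range n, (u k - 2*(u k)^2) := by
      rw [Finset.sum_sub_distrib]
      have h2 : ∑ k ∈ Finset.range n, 2*(u k)^2 = 2 * ∑ k ∈ Finset.range n, (u k)^2 := by
        rw [Finset.mul_sum]
      rw [h2]
      have : (ε/4) * (ε * N) - 2 * ((ε/4)^2 * N) = δ * N := by rw [hδ]; ring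
      linarith [hsum1, hsum2]
    linarith
  calc c ≤ max c 1 := le_max_left c 1
    _ = Real.exp (Real.log (max c 1)) := (Real.exp_log (lt_of_lt_of_le one_pos (le_max_right c 1))).symm
    _ ≤ Real.exp (∑ k ∈ Finset.range n, (u k - 2*(u k)^2)) := Real.exp_le_exp.2 hexp_ge
    _ ≤ _ := hchain
/-- Side gamble used for betting against the lower (`b = false`) or upper (`b = true`)
forecast. -/
noncomputable def gSide (lo hi : Situation → ℝ) (b : Bool) : Situation → Bool → ℝ :=
  fun s x => if b then bit x - hi s else lo s - bit x

/-- The family of betting supermartingales, indexed by a natural number coding a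
selection process, a side, and a rational accuracy. -/
noncomputable def Ffam (lo hi : Situation → ℝ) (e : ℕ → Situation → Bool) (n : ℕ) :
    Situation → ℝ :=
  prodF (fun s x => 1 + ((1 / (n.unpair.2.unpair.2 + 1 : ℝ)) / 4) *
    (if e n.unpair.1 s then 1 else 0) * gSide lo hi (n.unpair.2.unpair.1 == 1) s x)

lemma gSide_abs_le {lo hi : Situation → ℝ} (hφ : IsForecastingSystem lo hi)
    (b : Bool) (s : Situation) (x : Bool) : |gSide lo hi b s x| ≤ 1 := by
  obtain ⟨h1, h2, h3⟩ := hφ s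
  have hb : 0 ≤ bit x ∧ bit x ≤ 1 := by unfold bit; split <;> norm_num
  rw [abs_le]
  unfold gSide
  split <;> constructor <;> linarith [hb.1, hb.2]

lemma gSide_localE_le {lo hi : Situation → ℝ} (hφ : IsForecastingSystem lo hi)
    (b : Bool) (s : Situation) (p : ℝ) (hp : p = lo s ∨ p = hi s) :
    localE p (gSide lo hi b s) ≤ 0 := by
  obtain ⟨h1, h2, h3⟩ := hφ s
  unfold gSide localE bit
  rcases hp with hp | hp <;> subst hp <;> cases b <;> simp <;> nlinarith

/-- Multiplier bounds for the family. -/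
lemma Ffam_mult_bounds {lo hi : Situation → ℝ} (hφ : IsForecastingSystem lo hi)
    (e : ℕ → Situation → Bool) (n : ℕ) (s : Situation) (x : Bool) :
    (1/2 : ℝ) ≤ 1 + ((1 / (n.unpair.2.unpair.2 + 1 : ℝ)) / 4) *
      (if e n.unpair.1 s then 1 else 0) * gSide lo hi (n.unpair.2.unpair.1 == 1) s x ∧
    1 + ((1 / (n.unpair.2.unpair.2 + 1 : ℝ)) / 4) *
      (if e n.unpair.1 s then 1 else 0) * gSide lo hi (n.unpair.2.unpair.1 == 1) s x ≤ 3/2 := by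
  set ε : ℝ := 1 / (n.unpair.2.unpair.2 + 1 : ℝ) with hε
  have hε0 : 0 < ε := by positivity
  have hε1 : ε ≤ 1 := by
    rw [hε]
    rw [div_le_one (by positivity)]
    have : (0:ℝ) ≤ (n.unpair.2.unpair.2 : ℝ) := Nat.cast_nonneg _
    linarith
  have hind : (if e n.unpair.1 s then (1:ℝ) else 0) = 1 ∨
      (if e n.unpair.1 s then (1:ℝ) else 0) = 0 := by split <;> simp
  have hg := gSide_abs_le hφ (n.unpair.2.unpair.1 == 1) s x
  rw [abs_le] at hg
  rcases hind with h | h <;> rw [h] <;> constructor <;> nlinarith [hg.1, hg.2]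

lemma Ffam_supermartingale {lo hi : Situation → ℝ} (hφ : IsForecastingSystem lo hi)
    (e : ℕ → Situation → Bool) (n : ℕ) : IsSupermartingale lo hi (Ffam lo hi e n) := by
  have key : ∀ (p : ℝ) s, (p = lo s ∨ p = hi s) →
      localE p (fun x => 1 + ((1 / (n.unpair.2.unpair.2 + 1 : ℝ)) / 4) *
        (if e n.unpair.1 s then 1 else 0) * gSide lo hi (n.unpair.2.unpair.1 == 1) s x) ≤ 1 := by
    intro p s hp
    have h1 := gSide_localE_le hφ (n.unpair.2.unpair.1 == 1) s p hp
    have hc : (0:ℝ) ≤ ((1 / (n.unpair.2.unpair.2 + 1 : ℝ)) / 4) *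
        (if e n.unpair.1 s then 1 else 0) := by positivity
    rw [localE_const_add_mul p (((1 / (n.unpair.2.unpair.2 + 1 : ℝ)) / 4) *
        (if e n.unpair.1 s then 1 else 0)) (gSide lo hi (n.unpair.2.unpair.1 == 1) s)]
    nlinarith [mul_nonpos_of_nonneg_of_nonpos hc h1]
  apply prodF_supermartingale
  · intro s x
    linarith [(Ffam_mult_bounds hφ e n s x).1]
  · intro s
    exact key (lo s) s (Or.inl rfl)
  · intro s
    exact key (hi s) s (Or.inr rfl)

lemma Ffam_pos {lo hi : Situation → ℝ} (hφ : IsForecastingSystem lo hi)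
    (e : ℕ → Situation → Bool) (n : ℕ) (s : Situation) : 0 < Ffam lo hi e n s :=
  prodF_pos (fun s x => by linarith [(Ffam_mult_bounds hφ e n s x).1]) s

lemma Ffam_nil (lo hi : Situation → ℝ) (e : ℕ → Situation → Bool) (n : ℕ) :
    Ffam lo hi e n [] = 1 := prodF_nil _

lemma Ffam_le {lo hi : Situation → ℝ} (hφ : IsForecastingSystem lo hi)
    (e : ℕ → Situation → Bool) (n : ℕ) (s : Situation) :
    Ffam lo hi e n s ≤ (3/2) ^ s.length :=
  prodF_le (fun s x => by linarith [(Ffam_mult_bounds hφ e n s x).1])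
    (fun s x => (Ffam_mult_bounds hφ e n s x).2) s
lemma ereal_neg_witness {a : EReal} (h : a < 0) :
    ∃ j : ℕ, a < (((-(1 / (j + 1))) : ℝ) : EReal) := by
  induction a with
  | bot => exact ⟨0, EReal.bot_lt_coe _⟩
  | coe r =>
    have hr : r < 0 := by exact_mod_cast h
    obtain ⟨j, hj⟩ := exists_nat_one_div_lt (by linarith : (0:ℝ) < -r)
    exact ⟨j, by exact_mod_cast (by linarith : r < -(1 / (j + 1 : ℝ)))⟩
  | top => exact absurd h (by simp)

lemma ereal_pos_witness {a : EReal} (h : 0 < a) :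
    ∃ j : ℕ, (((1 / (j + 1)) : ℝ) : EReal) < a := by
  induction a with
  | bot => exact absurd h (by simp)
  | coe r =>
    have hr : 0 < r := by exact_mod_cast h
    obtain ⟨j, hj⟩ := exists_nat_one_div_lt hr
    exact ⟨j, by exact_mod_cast hj⟩
  | top => exact ⟨0, EReal.coe_lt_top _⟩
lemma coverage {lo hi : Situation → ℝ} (hφ : IsForecastingSystem lo hi)
    {𝒮 : Set (Situation → Bool)} (e : ℕ → Situation → Bool) (hrange : 𝒮 ⊆ Set.range e)
    {ω : BinPath} (hω : ¬ SSetRandom 𝒮 lo hi ω) :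
    ∃ n : ℕ, ∀ c : ℝ, ∃ m : ℕ, c ≤ Ffam lo hi e n (pref ω m) := by
  rw [SSetRandom] at hω
  push_neg at hω
  obtain ⟨S, hS, hT, hPQ⟩ := hω
  obtain ⟨i, hei⟩ := hrange hS
  have hNpos : ∀ᶠ n in atTop, (1:ℝ) ≤ ∑ k ∈ Finset.range n, selVal S ω k :=
    hT.eventually_ge_atTop 1
  by_cases hL : 0 ≤ liminf (fun n =>
      (((∑ k ∈ Finset.range n, selVal S ω k * (bit (ω k) - lo (pref ω k))) /
        (∑ k ∈ Finset.range n, selVal S ω k) : ℝ) : EReal)) atTop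
  · -- upper violation
    have hU := hPQ hL
    obtain ⟨j, hj⟩ := ereal_pos_witness hU
    set ε : ℝ := 1 / ((j:ℝ) + 1) with hε
    have hε0 : 0 < ε := by positivity
    have hε1 : ε ≤ 1 := by
      rw [hε, div_le_one (by positivity)]
      linarith [Nat.cast_nonneg (α := ℝ) j]
    have hfr := frequently_lt_of_lt_limsup (by isBoundedDefault) hj
    have hfreq : ∃ᶠ n in atTop, ε * (∑ k ∈ Finset.range n, selVal S ω k) ≤
        ∑ k ∈ Finset.range n, selVal S ω k * gSide lo hi true (pref ω k) (ω k) := by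
      refine (hfr.and_eventually hNpos).mono ?_
      rintro n ⟨h1, h2⟩
      have h1' : ε < (∑ k ∈ Finset.range n, selVal S ω k * (bit (ω k) - hi (pref ω k))) /
          (∑ k ∈ Finset.range n, selVal S ω k) := by exact_mod_cast h1
      rw [lt_div_iff₀ (by linarith)] at h1'
      have heq : ∑ k ∈ Finset.range n, selVal S ω k * gSide lo hi true (pref ω k) (ω k) =
          ∑ k ∈ Finset.range n, selVal S ω k * (bit (ω k) - hi (pref ω k)) := by
        apply Finset.sum_congr rfl
        intro k _
        simp [gSide]
      rw [heq]
      nlinarith [h1']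
    have hub := prodF_unbounded S (gSide lo hi true) (gSide_abs_le hφ true) hε0 hε1 ω hT hfreq
    refine ⟨Nat.pair i (Nat.pair 1 j), ?_⟩
    intro c
    obtain ⟨m, hm⟩ := hub c
    refine ⟨m, ?_⟩
    have hFf : Ffam lo hi e (Nat.pair i (Nat.pair 1 j)) =
        prodF (fun s x => 1 + (ε/4) * (if S s then 1 else 0) * gSide lo hi true s x) := by
      unfold Ffam
      simp only [Nat.unpair_pair, hei, hε]
      norm_num <;> rfl
    rw [hFf]
    exact hm
  · -- lower violation
    push_neg at hL
    obtain ⟨j, hj⟩ := ereal_neg_witness hL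
    set ε : ℝ := 1 / ((j:ℝ) + 1) with hε
    have hε0 : 0 < ε := by positivity
    have hε1 : ε ≤ 1 := by
      rw [hε, div_le_one (by positivity)]
      linarith [Nat.cast_nonneg (α := ℝ) j]
    have hfr := frequently_lt_of_liminf_lt (by isBoundedDefault) hj
    have hfreq : ∃ᶠ n in atTop, ε * (∑ k ∈ Finset.range n, selVal S ω k) ≤
        ∑ k ∈ Finset.range n, selVal S ω k * gSide lo hi false (pref ω k) (ω k) := by
      refine (hfr.and_eventually hNpos).mono ?_
      rintro n ⟨h1, h2⟩
      have h1' : (∑ k ∈ Finset.range n, selVal S ω k * (bit (ω k) - lo (pref ω k))) /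
          (∑ k ∈ Finset.range n, selVal S ω k) < -ε := by exact_mod_cast h1
      rw [div_lt_iff₀ (by linarith)] at h1'
      have heq : ∑ k ∈ Finset.range n, selVal S ω k * gSide lo hi false (pref ω k) (ω k) =
          -∑ k ∈ Finset.range n, selVal S ω k * (bit (ω k) - lo (pref ω k)) := by
        rw [← Finset.sum_neg_distrib]
        apply Finset.sum_congr rfl
        intro k _
        simp [gSide]
        ring
      rw [heq]
      nlinarith [h1']
    have hub := prodF_unbounded S (gSide lo hi false) (gSide_abs_le hφ false) hε0 hε1 ω hT hfreq
    refine ⟨Nat.pair i (Nat.pair 0 j), ?_⟩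
    intro c
    obtain ⟨m, hm⟩ := hub c
    refine ⟨m, ?_⟩
    have hFf : Ffam lo hi e (Nat.pair i (Nat.pair 0 j)) =
        prodF (fun s x => 1 + (ε/4) * (if S s then 1 else 0) * gSide lo hi false s x) := by
      unfold Ffam
      simp only [Nat.unpair_pair, hei, hε]
      norm_num <;> rfl
    rw [hFf]
    exact hm
/-- A path along which a supermartingale never increases. -/
noncomputable def descend (pick : Situation → Bool) : ℕ → Situation
  | 0 => []
  | n + 1 => descend pick n ++ [pick (descend pick n)]

lemma descend_length (pick : Situation → Bool) (n : ℕ) : (descend pick n).length = n := by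
  induction n with
  | zero => rfl
  | succ n ih => simp [descend, ih]

lemma supermartingale_exists_le {lo hi : Situation → ℝ} (hφ : IsForecastingSystem lo hi)
    {M : Situation → ℝ} (hM : IsSupermartingale lo hi M) (s : Situation) :
    ∃ x : Bool, M (s ++ [x]) ≤ M s := by
  by_contra hcon
  push_neg at hcon
  have h1 := le_of_max_le_left (hM s)
  obtain ⟨hl0, hlh, hh1⟩ := hφ s
  have ha := hcon true
  have hb := hcon false
  rw [localE] at h1
  simp only [diffP] at h1
  rcases eq_or_lt_of_le hl0 with h0 | h0
  · rw [← h0] at h1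
    norm_num at h1
    linarith
  · nlinarith [mul_pos h0 (sub_pos.2 ha),
      mul_nonneg (by linarith : (0:ℝ) ≤ 1 - lo s) (le_of_lt (sub_pos.2 hb))]

lemma supermartingale_initial_nonneg {lo hi : Situation → ℝ} (hφ : IsForecastingSystem lo hi)
    {M : Situation → ℝ} (hM : IsSupermartingale lo hi M)
    (hliminf : ∀ ω : BinPath, (0 : EReal) ≤ liminf (fun n => ((M (pref ω n) : ℝ) : EReal)) atTop) :
    0 ≤ M [] := by
  choose pick hpick using fun s => supermartingale_exists_le hφ hM s
  set ω : BinPath := fun n => pick (descend pick n) with hω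
  have hpref : ∀ n, pref ω n = descend pick n := by
    intro n
    induction n with
    | zero => rfl
    | succ n ih => rw [pref_succ, ih]; rfl
  have hmono : ∀ n, M (pref ω n) ≤ M [] := by
    intro n
    induction n with
    | zero => exact le_of_eq (by rw [hpref]; rfl)
    | succ n ih =>
      rw [hpref] at ih ⊢
      calc M (descend pick (n+1)) ≤ M (descend pick n) := hpick _
        _ ≤ M [] := ih
  have h1 := hliminf ω
  have h2 : liminf (fun n => ((M (pref ω n) : ℝ) : EReal)) atTop ≤ ((M [] : ℝ) : EReal) := by
    calc liminf (fun n => ((M (pref ω n) : ℝ) : EReal)) atTop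
        ≤ liminf (fun _ : ℕ => ((M [] : ℝ) : EReal)) atTop := by
          exact liminf_le_liminf (Eventually.of_forall fun n => by exact_mod_cast hmono n)
      _ = ((M [] : ℝ) : EReal) := liminf_const _
  have := le_trans h1 h2
  exact_mod_cast this
lemma exists_eps_supermartingale {lo hi : Situation → ℝ} (hφ : IsForecastingSystem lo hi)
    {𝒮 : Set (Situation → Bool)} (hc : 𝒮.Countable) {ε : ℝ} (hε : 0 < ε) :
    ∃ M : Situation → ℝ, IsSupermartingale lo hi M ∧ M [] = ε ∧
      ∀ ω : BinPath, ((Set.indicator {ω : BinPath | SSetRandom 𝒮 lo hi ω}ᶜ 1 ω : ℝ) : EReal) ≤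
        liminf (fun n => ((M (pref ω n) : ℝ) : EReal)) atTop := by
  obtain ⟨e, he⟩ := (hc.insert (fun _ => false)).exists_eq_range (Set.insert_nonempty _ _)
  have hrange : 𝒮 ⊆ Set.range e := fun S hS => he ▸ Set.mem_insert_of_mem _ hS
  set F : ℕ → Situation → ℝ := fun n => Ffam lo hi e n with hF
  set G : ℕ → Situation → ℝ := fun n => stopP (F n) ((2:ℝ)^(n+1)/ε) with hG
  set w : ℕ → ℝ := fun n => ε * (1/2:ℝ)^(n+1) with hw
  have hw0 : ∀ n, 0 < w n := fun n => by positivity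
  have hG0 : ∀ n s, 0 ≤ G n s := fun n s =>
    stopP_nonneg (fun t => (Ffam_pos hφ e n t).le) _ s
  have hGle : ∀ n s, G n s ≤ (3/2:ℝ)^s.length := fun n s =>
    stopP_le (Ffam_le hφ e n) _ s
  have hGsm : ∀ n, IsSupermartingale lo hi (G n) := fun n =>
    stopP_supermartingale (Ffam_supermartingale hφ e n)
  have hsum : ∀ s, Summable (fun n => w n * G n s) := by
    intro s
    refine Summable.of_nonneg_of_le (fun n => mul_nonneg (hw0 n).le (hG0 n s)) ?_
      ((summable_geometric_of_lt_one (r := (1/2:ℝ)) (by norm_num) (by norm_num)).mul_left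
        (ε * (3/2:ℝ)^s.length * (1/2)))
    intro n
    have h1 := mul_le_mul_of_nonneg_left (hGle n s) (hw0 n).le
    have h2 : w n * (3/2:ℝ)^s.length = (ε * (3/2:ℝ)^s.length * (1/2)) * (1/2:ℝ)^n := by
      rw [hw]; simp only; rw [pow_succ]; ring
    linarith [h1, h2.le, h2.ge]
  refine ⟨fun s => ∑' n, w n * G n s, ?_, ?_, ?_⟩
  · -- supermartingale
    intro s
    have hA := hsum (s ++ [true])
    have hB := hsum (s ++ [false])
    have hC := hsum s
    have hloc : ∀ p : ℝ, (∀ n, localE p (diffP (G n) s) ≤ 0) →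
        localE p (diffP (fun s => ∑' n, w n * G n s) s) ≤ 0 := by
      intro p hp
      have heq : localE p (diffP (fun s => ∑' n, w n * G n s) s) =
          ∑' n, (p * (w n * G n (s ++ [true]) - w n * G n s) +
            (1 - p) * (w n * G n (s ++ [false]) - w n * G n s)) := by
        rw [localE]
        simp only [diffP]
        rw [← Summable.tsum_sub hA hC, ← Summable.tsum_sub hB hC, ← tsum_mul_left, ← tsum_mul_left,
          ← Summable.tsum_add ((hA.sub hC).mul_left p) ((hB.sub hC).mul_left (1 - p))]
      rw [heq]
      apply tsum_nonpos
      intro n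
      have h3 : p * (w n * G n (s ++ [true]) - w n * G n s) +
          (1 - p) * (w n * G n (s ++ [false]) - w n * G n s) =
          w n * localE p (diffP (G n) s) := by
        rw [localE]; simp only [diffP]; ring
      rw [h3]
      exact mul_nonpos_of_nonneg_of_nonpos (hw0 n).le (hp n)
    apply max_le
    · exact hloc (lo s) fun n => le_of_max_le_left (hGsm n s)
    · exact hloc (hi s) fun n => le_of_max_le_right (hGsm n s)
  · -- initial value
    have h1 : ∀ n, w n * G n [] = (ε * (1/2)) * (1/2:ℝ)^n := by
      intro n
      have : G n [] = 1 := by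
        rw [hG]; simp only; rw [stopP_nil, hF]; simp only; exact Ffam_nil lo hi e n
      rw [this, hw]; simp only; rw [pow_succ]; ring
    simp only [h1]
    rw [tsum_mul_left, tsum_geometric_of_lt_one (by norm_num) (by norm_num)]
    norm_num
    ring
  · -- liminf domination
    intro ω
    by_cases hmem : ω ∈ {ω : BinPath | SSetRandom 𝒮 lo hi ω}
    · rw [Set.indicator_of_notMem (by simpa using hmem)]
      rw [EReal.coe_zero]
      apply le_liminf_of_le (by isBoundedDefault)
      apply Eventually.of_forall
      intro n
      have : (0:ℝ) ≤ ∑' n', w n' * G n' (pref ω n) :=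
        tsum_nonneg fun n' => mul_nonneg (hw0 n').le (hG0 n' _)
      exact_mod_cast this
    · rw [Set.indicator_of_mem (by simpa using hmem), Pi.one_apply]
      obtain ⟨n₀, hn₀⟩ := coverage hφ e hrange (by simpa using hmem)
      obtain ⟨m, hm⟩ := hn₀ ((2:ℝ)^(n₀+1)/ε)
      have hev : ∀ m', m ≤ m' → (1:ℝ) ≤ ∑' n', w n' * G n' (pref ω m') := by
        intro m' hm'
        have h4 : (2:ℝ)^(n₀+1)/ε ≤ G n₀ (pref ω m') := stopP_pref_ge hm m' hm'
        have h5 : w n₀ * G n₀ (pref ω m') ≤ ∑' n', w n' * G n' (pref ω m') :=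
          Summable.le_tsum (hsum _) n₀ fun j _ => mul_nonneg (hw0 j).le (hG0 j _)
        have h6 : (1:ℝ) = w n₀ * ((2:ℝ)^(n₀+1)/ε) := by
          rw [hw]; simp only
          rw [div_pow, one_pow]
          field_simp
        have h7 := mul_le_mul_of_nonneg_left h4 (hw0 n₀).le
        linarith
      apply le_liminf_of_le (by isBoundedDefault)
      rw [eventually_atTop]
      exact ⟨m, fun m' hm' => by exact_mod_cast hev m' hm'⟩
/-- for a countable set `𝒮` of selection processes, the set of
`𝒮`-random paths for `φ` is almost sure for `φ`. -/
theorem statement_10 (lo hi : Situation → ℝ) (hφ : IsForecastingSystem lo hi)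
    (𝒮 : Set (Situation → Bool)) (hc : 𝒮.Countable) :
    AlmostSure lo hi {ω : BinPath | SSetRandom 𝒮 lo hi ω} := by
  rw [AlmostSure, upperProb, globalUpperE]
  have hlb : ∀ m ∈ {m : ℝ | ∃ M : Situation → ℝ, IsSupermartingale lo hi M ∧ M [] = m ∧
      ∀ ω : BinPath, ((Set.indicator {ω : BinPath | SSetRandom 𝒮 lo hi ω}ᶜ 1 ω : ℝ) : EReal) ≤
        liminf (fun n => ((M (pref ω n) : ℝ) : EReal)) atTop}, 0 ≤ m := by
    rintro m ⟨M, hsm, hini, hlim⟩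
    rw [← hini]
    apply supermartingale_initial_nonneg hφ hsm
    intro ω
    refine le_trans ?_ (hlim ω)
    have h0 : (0:ℝ) ≤ Set.indicator {ω : BinPath | SSetRandom 𝒮 lo hi ω}ᶜ 1 ω :=
      Set.indicator_apply_nonneg fun _ => by norm_num
    exact_mod_cast h0
  have hmem : ∀ ε : ℝ, 0 < ε → ε ∈ {m : ℝ | ∃ M : Situation → ℝ,
      IsSupermartingale lo hi M ∧ M [] = m ∧
      ∀ ω : BinPath, ((Set.indicator {ω : BinPath | SSetRandom 𝒮 lo hi ω}ᶜ 1 ω : ℝ) : EReal) ≤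
        liminf (fun n => ((M (pref ω n) : ℝ) : EReal)) atTop} := by
    intro ε hε
    obtain ⟨M, h1, h2, h3⟩ := exists_eps_supermartingale hφ hc hε
    exact ⟨M, h1, h2, h3⟩
  apply le_antisymm
  · apply le_of_forall_pos_le_add
    intro ε hε
    have := csInf_le ⟨0, hlb⟩ (hmem ε hε)
    linarith
  · exact le_csInf ⟨1, hmem 1 one_pos⟩ hlb
end

section
/- For any forecasting system φ and any countable set 𝒮 of selection processes, there is at least one path ω ∈ Ω that is 𝒮-random for φ. -/
open Filter Classical

namespace St11

noncomputable def lamm (m : ℕ) : ℝ := 1 / (m + 2)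

lemma lamm_pos (m : ℕ) : 0 < lamm m := by
  have h : (0:ℝ) < (m:ℝ) + 2 := by positivity
  exact div_pos one_pos h

lemma lamm_le_half (m : ℕ) : lamm m ≤ 1/2 := by
  have h : (2:ℝ) ≤ (m:ℝ) + 2 := by
    have : (0:ℝ) ≤ (m:ℝ) := Nat.cast_nonneg m
    linarith
  rw [lamm, div_le_div_iff₀ (by linarith) (by norm_num)]
  linarith

lemma bit_bounds (x : Bool) : 0 ≤ bit x ∧ bit x ≤ 1 := by
  cases x <;> simp [bit]

noncomputable def mult (S : Situation → Bool) (lam : ℝ) (bt : Bool)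
    (lo hi : Situation → ℝ) (s : Situation) (x : Bool) : ℝ :=
  1 + (if S s then lam * (if bt then lo s - bit x else bit x - hi s) else 0)

noncomputable def prodF (D : Situation → Bool → ℝ) (s : Situation) : ℝ :=
  ∏ k ∈ Finset.range s.length, D (s.take k) (s.getD k false)

lemma prodF_nil (D : Situation → Bool → ℝ) : prodF D [] = 1 := by simp [prodF]

lemma prodF_append (D : Situation → Bool → ℝ) (s : Situation) (x : Bool) :
    prodF D (s ++ [x]) = prodF D s * D s x := by
  have hlen : (s ++ [x]).length = s.length + 1 := by simp
  rw [prodF, hlen, Finset.prod_range_succ]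
  congr 1
  · apply Finset.prod_congr rfl
    intro k hk
    have hk' : k < s.length := Finset.mem_range.mp hk
    rw [List.take_append_of_le_length hk'.le, List.getD_append _ _ _ _ hk']
  · rw [List.take_left, List.getD_append_right _ _ _ _ le_rfl, Nat.sub_self]
    rfl

lemma mult_bounds {lo hi : Situation → ℝ} (hφ : IsForecastingSystem lo hi)
    {lam : ℝ} (h0 : 0 ≤ lam) (h2 : lam ≤ 1/2) (S : Situation → Bool) (bt : Bool)
    (s : Situation) (x : Bool) :
    1/2 ≤ mult S lam bt lo hi s x ∧ mult S lam bt lo hi s x ≤ 3/2 := by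
  obtain ⟨hlo0, hlohi, hhi1⟩ := hφ s
  obtain ⟨hb0, hb1⟩ := bit_bounds x
  unfold mult
  split_ifs with hS hbt
  case _ => constructor <;> nlinarith
  case _ => constructor <;> nlinarith
  case _ => constructor <;> norm_num

lemma mult_convex {lo hi : Situation → ℝ} {s : Situation}
    (hlo0 : 0 ≤ lo s) (hlohi : lo s ≤ hi s)
    (S : Situation → Bool) {lam : ℝ} (hlam : 0 ≤ lam) (bt : Bool) :
    lo s * mult S lam bt lo hi s true + (1 - lo s) * mult S lam bt lo hi s false ≤ 1 := by
  cases hS : S s <;> cases bt <;> simp [mult, hS, bit] <;> nlinarith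

lemma exp_quad (u : ℝ) (hu : -(1/2) ≤ u) : Real.exp (u - 2*u^2) ≤ 1 + u := by
  set x := u - 2*u^2 with hx
  have h1 : 0 < 1 - x := by nlinarith [sq_nonneg u]
  have h2 : Real.exp x ≤ (1 - x)⁻¹ := by
    have h3 : 1 - x ≤ Real.exp (-x) := by
      have := Real.add_one_le_exp (-x); linarith
    have h4 := inv_anti₀ h1 h3
    rwa [← Real.exp_neg, neg_neg] at h4
  have h5 : (1 - x)⁻¹ ≤ 1 + u := by
    rw [inv_le_iff_one_le_mul₀ h1]
    nlinarith [sq_nonneg u]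
  linarith

lemma core (u σ : ℕ → ℝ) (lam C : ℝ) (hC : 1 ≤ C) (hlam : 0 ≤ lam) (hlam2 : lam ≤ 1/2)
    (hσ : ∀ k, σ k = 0 ∨ σ k = 1) (hu : ∀ k, |u k| ≤ lam * σ k)
    (hbound : ∀ n, ∏ k ∈ Finset.range n, (1 + u k) ≤ C) (n : ℕ) :
    ∑ k ∈ Finset.range n, u k ≤
      Real.log C + 2 * lam^2 * ∑ k ∈ Finset.range n, σ k := by
  have hσ01 : ∀ k, 0 ≤ σ k ∧ σ k ≤ 1 := fun k => by
    rcases hσ k with h | h <;> simp [h]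
  have hu2 : ∀ k, -(1/2) ≤ u k := by
    intro k
    have h1 := abs_le.mp (hu k)
    have h2 := (hσ01 k).2
    nlinarith [h1.1]
  have h1 : Real.exp (∑ k ∈ Finset.range n, (u k - 2*(u k)^2)) ≤ C := by
    rw [Real.exp_sum]
    calc ∏ k ∈ Finset.range n, Real.exp (u k - 2*(u k)^2)
        ≤ ∏ k ∈ Finset.range n, (1 + u k) :=
          Finset.prod_le_prod (fun k _ => (Real.exp_pos _).le)
            (fun k _ => exp_quad _ (hu2 k))
      _ ≤ C := hbound n
  have h2 : ∑ k ∈ Finset.range n, (u k - 2*(u k)^2) ≤ Real.log C :=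
    (Real.le_log_iff_exp_le (by linarith)).mpr h1
  have h3 : ∑ k ∈ Finset.range n, (u k)^2 ≤ lam^2 * ∑ k ∈ Finset.range n, σ k := by
    rw [Finset.mul_sum]
    apply Finset.sum_le_sum
    intro k _
    have h4 := hu k
    rcases hσ k with h | h
    · have hz : u k = 0 := by
        rw [h, mul_zero] at h4
        exact abs_eq_zero.mp (le_antisymm h4 (abs_nonneg _))
      simp [hz, h]
    · have h5 := abs_le.mp h4
      rw [h, mul_one] at h5
      rw [h, mul_one]
      nlinarith [h5.1, h5.2]
  have h4 : ∑ k ∈ Finset.range n, (u k - 2*(u k)^2)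
      = ∑ k ∈ Finset.range n, u k - 2 * ∑ k ∈ Finset.range n, (u k)^2 := by
    rw [Finset.sum_sub_distrib, Finset.mul_sum]
  linarith

lemma liminf_aux (g : ℕ → ℝ)
    (h : ∀ m : ℕ, ∀ᶠ n in atTop, -(3 * lamm m) ≤ g n) :
    0 ≤ liminf (fun n => ((g n : ℝ) : EReal)) atTop := by
  have hle : ∀ m : ℕ, ((-(3 * lamm m) : ℝ) : EReal)
      ≤ liminf (fun n => ((g n : ℝ) : EReal)) atTop := by
    intro m
    have h1 : liminf (fun _ : ℕ => ((-(3 * lamm m) : ℝ) : EReal)) atTop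
        ≤ liminf (fun n => ((g n : ℝ) : EReal)) atTop :=
      liminf_le_liminf ((h m).mono fun n hn => EReal.coe_le_coe_iff.mpr hn)
    simpa [liminf_const] using h1
  by_contra h0
  push_neg at h0
  rcases EReal.lt_iff_exists_real_btwn.mp h0 with ⟨x, hx1, hx2⟩
  have hx0 : x < 0 := by exact_mod_cast hx2
  obtain ⟨m, hm⟩ := exists_nat_gt (3 / (-x))
  have hx0' : (0:ℝ) < -x := by linarith
  have h3 : 3 < ((m:ℝ) + 2) * (-x) := by
    have h2 : 3 / (-x) < (m:ℝ) + 2 := by linarith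
    exact (div_lt_iff₀ hx0').mp h2
  have hmx : x < -(3 * lamm m) := by
    have hm2 : (0:ℝ) < (m:ℝ) + 2 := by positivity
    have : 3 * lamm m < -x := by
      rw [lamm, mul_one_div, div_lt_iff₀ hm2]
      nlinarith
    linarith
  have h5 : ((x:ℝ) : EReal) < ((-(3 * lamm m) : ℝ) : EReal) := by exact_mod_cast hmx
  exact absurd (lt_trans (lt_of_lt_of_le h5 (hle m)) hx1) (lt_irrefl _)

lemma limsup_aux (g : ℕ → ℝ)
    (h : ∀ m : ℕ, ∀ᶠ n in atTop, g n ≤ 3 * lamm m) :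
    limsup (fun n => ((g n : ℝ) : EReal)) atTop ≤ 0 := by
  have hle : ∀ m : ℕ, limsup (fun n => ((g n : ℝ) : EReal)) atTop
      ≤ ((3 * lamm m : ℝ) : EReal) := by
    intro m
    have h1 : limsup (fun n => ((g n : ℝ) : EReal)) atTop
        ≤ limsup (fun _ : ℕ => ((3 * lamm m : ℝ) : EReal)) atTop :=
      limsup_le_limsup ((h m).mono fun n hn => EReal.coe_le_coe_iff.mpr hn)
    simpa [limsup_const] using h1
  by_contra h0
  push_neg at h0
  rcases EReal.lt_iff_exists_real_btwn.mp h0 with ⟨x, hx1, hx2⟩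
  have hx0 : 0 < x := by exact_mod_cast hx1
  obtain ⟨m, hm⟩ := exists_nat_gt (3 / x)
  have h3 : 3 < ((m:ℝ) + 2) * x := by
    have h2 : 3 / x < (m:ℝ) + 2 := by linarith
    exact (div_lt_iff₀ hx0).mp h2
  have hmx : 3 * lamm m < x := by
    have hm2 : (0:ℝ) < (m:ℝ) + 2 := by positivity
    rw [lamm, mul_one_div, div_lt_iff₀ hm2]
    nlinarith
  have h5 : ((3 * lamm m : ℝ) : EReal) < ((x:ℝ) : EReal) := by exact_mod_cast hmx
  exact absurd (lt_trans (lt_of_le_of_lt (hle m) h5) hx2) (lt_irrefl _)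

def dec3 (n : ℕ) : ℕ × ℕ × Bool :=
  let p := (Denumerable.eqv (ℕ × ℕ × ℕ)).symm n
  (p.1, p.2.1, decide (p.2.2 = 0))

def enc3 (i m : ℕ) (b : Bool) : ℕ :=
  Denumerable.eqv (ℕ × ℕ × ℕ) (i, m, if b then 0 else 1)

lemma dec3_enc3 (i m : ℕ) (b : Bool) : dec3 (enc3 i m b) = (i, m, b) := by
  cases b <;> simp [dec3, enc3, Equiv.symm_apply_apply]

noncomputable def DD (lo hi : Situation → ℝ) (f : ℕ → Situation → Bool) (n : ℕ) :
    Situation → Bool → ℝ :=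
  mult (f (dec3 n).1) (lamm (dec3 n).2.1) ((dec3 n).2.2) lo hi

lemma DD_bounds {lo hi : Situation → ℝ} (hφ : IsForecastingSystem lo hi)
    (f : ℕ → Situation → Bool) (n : ℕ) (s : Situation) (x : Bool) :
    1/2 ≤ DD lo hi f n s x ∧ DD lo hi f n s x ≤ 3/2 :=
  mult_bounds hφ (lamm_pos _).le (lamm_le_half _) _ _ s x

lemma prodF_pos {D : Situation → Bool → ℝ} (h : ∀ s x, 1/2 ≤ D s x) (s : Situation) :
    0 < prodF D s :=
  Finset.prod_pos fun k _ => lt_of_lt_of_le (by norm_num) (h _ _)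

lemma prodF_le {D : Situation → Bool → ℝ} (h : ∀ s x, 1/2 ≤ D s x ∧ D s x ≤ 3/2)
    (s : Situation) : prodF D s ≤ 2 ^ s.length := by
  calc prodF D s ≤ ∏ _k ∈ Finset.range s.length, (2:ℝ) :=
        Finset.prod_le_prod (fun k _ => le_trans (by norm_num) (h _ _).1)
          (fun k _ => le_trans (h _ _).2 (by norm_num))
    _ = 2 ^ s.length := by simp

noncomputable def TT (lo hi : Situation → ℝ) (f : ℕ → Situation → Bool)
    (s : Situation) : ℝ :=
  ∑' n, (2:ℝ)⁻¹ ^ (n+1) * prodF (DD lo hi f n) s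

lemma summable_TT {lo hi : Situation → ℝ} (hφ : IsForecastingSystem lo hi)
    (f : ℕ → Situation → Bool) (s : Situation) :
    Summable (fun n => (2:ℝ)⁻¹ ^ (n+1) * prodF (DD lo hi f n) s) := by
  apply Summable.of_nonneg_of_le
    (fun n => mul_nonneg (by positivity)
      (prodF_pos (fun s x => (DD_bounds hφ f n s x).1) s).le)
    (fun n => mul_le_mul_of_nonneg_left (prodF_le (DD_bounds hφ f n) s)
      (by positivity))
  have h1 : Summable (fun n : ℕ => (2:ℝ)⁻¹ ^ n * (2⁻¹ * 2 ^ s.length)) :=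
    (summable_geometric_of_lt_one (by norm_num) (by norm_num)).mul_right _
  exact h1.congr fun n => by rw [pow_succ]; ring

lemma TT_nil (lo hi : Situation → ℝ) (f : ℕ → Situation → Bool) :
    TT lo hi f [] = 1 := by
  have h1 : TT lo hi f [] = ∑' n : ℕ, (2:ℝ)⁻¹ ^ n * 2⁻¹ := by
    rw [TT]
    congr 1
    funext n
    rw [prodF_nil, mul_one, pow_succ]
  rw [h1, tsum_mul_right, tsum_geometric_of_lt_one (by norm_num) (by norm_num)]
  norm_num

lemma FF_le_TT {lo hi : Situation → ℝ} (hφ : IsForecastingSystem lo hi)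
    (f : ℕ → Situation → Bool) (n : ℕ) (s : Situation) :
    (2:ℝ)⁻¹ ^ (n+1) * prodF (DD lo hi f n) s ≤ TT lo hi f s :=
  Summable.le_tsum (summable_TT hφ f s) n fun j _ =>
    mul_nonneg (by positivity) (prodF_pos (fun s x => (DD_bounds hφ f j s x).1) s).le

lemma TT_step {lo hi : Situation → ℝ} (hφ : IsForecastingSystem lo hi)
    (f : ℕ → Situation → Bool) (s : Situation) :
    ∃ x : Bool, TT lo hi f (s ++ [x]) ≤ TT lo hi f s := by
  set p := lo s with hp
  obtain ⟨hp0, hplehi, hhi1⟩ := hφ s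
  have hp1 : p ≤ 1 := le_trans hplehi hhi1
  have key : p * TT lo hi f (s ++ [true]) + (1 - p) * TT lo hi f (s ++ [false])
      ≤ TT lo hi f s := by
    rw [TT, TT, ← tsum_mul_left, ← tsum_mul_left,
      ← Summable.tsum_add ((summable_TT hφ f (s ++ [true])).mul_left p)
        ((summable_TT hφ f (s ++ [false])).mul_left (1 - p))]
    apply Summable.tsum_le_tsum _
      (((summable_TT hφ f (s ++ [true])).mul_left p).add
        ((summable_TT hφ f (s ++ [false])).mul_left (1 - p)))
      (summable_TT hφ f s)
    intro n
    rw [prodF_append, prodF_append]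
    have hF : 0 < prodF (DD lo hi f n) s :=
      prodF_pos (fun s x => (DD_bounds hφ f n s x).1) s
    have hconv : p * DD lo hi f n s true + (1 - p) * DD lo hi f n s false ≤ 1 := by
      unfold DD
      exact mult_convex hp0 hplehi _ (lamm_pos _).le _
    have hw : (0:ℝ) ≤ (2:ℝ)⁻¹ ^ (n+1) := by positivity
    have h5 : (2:ℝ)⁻¹ ^ (n+1) * prodF (DD lo hi f n) s *
        (p * DD lo hi f n s true + (1 - p) * DD lo hi f n s false)
        ≤ (2:ℝ)⁻¹ ^ (n+1) * prodF (DD lo hi f n) s * 1 :=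
      mul_le_mul_of_nonneg_left hconv (by positivity)
    nlinarith [h5]
  by_contra hcontra
  push_neg at hcontra
  have ht := hcontra true
  have hf' := hcontra false
  rcases eq_or_lt_of_le hp0 with hp' | hp'
  · have hpz : p = 0 := by rw [hp, ← hp']
    rw [hpz] at key; simp at key; linarith
  · have hp'' : 0 < p := by rw [hp]; exact hp'
    have h6 := mul_lt_mul_of_pos_left ht hp''
    have h7 := mul_le_mul_of_nonneg_left hf'.le (by linarith : (0:ℝ) ≤ 1 - p)
    nlinarith

lemma pref_succ (ω : BinPath) (n : ℕ) : pref ω (n+1) = pref ω n ++ [ω n] := by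
  rw [pref, List.ofFn_succ']
  simp [List.concat_eq_append, pref]

lemma prodF_pref (D : Situation → Bool → ℝ) (ω : BinPath) (n : ℕ) :
    prodF D (pref ω n) = ∏ k ∈ Finset.range n, D (pref ω k) (ω k) := by
  induction n with
  | zero => simp [pref, prodF]
  | succ n ih => rw [pref_succ, prodF_append, ih, Finset.prod_range_succ]

lemma exists_random (lo hi : Situation → ℝ) (hφ : IsForecastingSystem lo hi)
    (f : ℕ → Situation → Bool) :
    ∃ ω : BinPath, SSetRandom (Set.range f) lo hi ω := by
  choose pick hpick using fun s => TT_step hφ f s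
  let g : ℕ → Situation := fun n => Nat.rec [] (fun _ s => s ++ [pick s]) n
  have hgsucc : ∀ n, g (n+1) = g n ++ [pick (g n)] := fun n => rfl
  let ω : BinPath := fun n => pick (g n)
  have hg : ∀ n, pref ω n = g n := by
    intro n
    induction n with
    | zero => simp [pref, g]
    | succ n ih => rw [pref_succ, ih, hgsucc]
  have hT : ∀ n, TT lo hi f (g n) ≤ 1 := by
    intro n
    induction n with
    | zero => rw [show g 0 = [] from rfl, TT_nil]
    | succ n ih => exact le_trans (by rw [hgsucc]; exact hpick (g n)) ih
  have hFb : ∀ j n, prodF (DD lo hi f j) (pref ω n) ≤ 2 ^ (j+1) := by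
    intro j n
    have h1 := FF_le_TT hφ f j (pref ω n)
    have h2 : TT lo hi f (pref ω n) ≤ 1 := by rw [hg]; exact hT n
    have h3 : (0:ℝ) < (2:ℝ)⁻¹ ^ (j+1) := by positivity
    have h4 : (2:ℝ)⁻¹ ^ (j+1) * 2 ^ (j+1) = 1 := by
      rw [← mul_pow]; norm_num
    nlinarith [h1, h2]
  refine ⟨ω, ?_⟩
  rintro S ⟨i, rfl⟩ hdiv
  have hsel01 : ∀ k, selVal (f i) ω k = 0 ∨ selVal (f i) ω k = 1 := by
    intro k; unfold selVal; split_ifs <;> simp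
  have hselnn : ∀ k, 0 ≤ selVal (f i) ω k := by
    intro k; rcases hsel01 k with h | h <;> rw [h] <;> norm_num
  constructor
  · apply liminf_aux
    intro m
    set j := enc3 i m true with hj
    set lam := lamm m with hlamdef
    have hlampos : 0 < lam := lamm_pos m
    have hlamle : lam ≤ 1/2 := lamm_le_half m
    set C : ℝ := 2 ^ (j+1) with hC
    have hC1 : (1:ℝ) ≤ C := by
      rw [hC]; exact one_le_pow₀ one_le_two
    have hDDj : DD lo hi f j = mult (f i) lam true lo hi := by
      unfold DD; rw [hj, dec3_enc3]
    set u : ℕ → ℝ :=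
      fun k => selVal (f i) ω k * (lam * (lo (pref ω k) - bit (ω k))) with hu
    have hueq : ∀ k, u k
        = selVal (f i) ω k * (lam * (lo (pref ω k) - bit (ω k))) := fun k => rfl
    have habs : ∀ k, |u k| ≤ lam * selVal (f i) ω k := by
      intro k
      obtain ⟨hl0, hlh, hh1⟩ := hφ (pref ω k)
      obtain ⟨hb0, hb1⟩ := bit_bounds (ω k)
      have hcabs : |lo (pref ω k) - bit (ω k)| ≤ 1 :=
        abs_le.mpr ⟨by linarith, by linarith⟩
      rcases hsel01 k with h | h
      · rw [hueq k, h]; simp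
      · rw [hueq k, h, one_mul, mul_one, abs_mul, abs_of_nonneg hlampos.le]
        nlinarith
    have hmul : ∀ k, 1 + u k = mult (f i) lam true lo hi (pref ω k) (ω k) := by
      intro k
      cases hk : f i (pref ω k) <;> simp [mult, selVal, hueq k, hk]
    have hbound : ∀ n, ∏ k ∈ Finset.range n, (1 + u k) ≤ C := by
      intro n
      calc ∏ k ∈ Finset.range n, (1 + u k)
          = ∏ k ∈ Finset.range n, mult (f i) lam true lo hi (pref ω k) (ω k) :=
            Finset.prod_congr rfl fun k _ => hmul k
        _ = prodF (DD lo hi f j) (pref ω n) := by rw [prodF_pref, hDDj]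
        _ ≤ C := hFb j n
    have hcore := core u (fun k => selVal (f i) ω k) lam C hC1 hlampos.le hlamle
      hsel01 habs hbound
    have hev := hdiv.eventually_ge_atTop (max 1 (Real.log C / lam^2))
    filter_upwards [hev] with n hn
    specialize hcore n
    set Sn := ∑ k ∈ Finset.range n, selVal (f i) ω k with hSn
    have hSn1 : (1:ℝ) ≤ Sn := le_trans (le_max_left _ _) hn
    have hlog : Real.log C ≤ lam^2 * Sn := by
      have h9 : Real.log C / lam^2 ≤ Sn := le_trans (le_max_right _ _) hn
      rw [div_le_iff₀ (by positivity)] at h9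
      linarith
    set A := ∑ k ∈ Finset.range n, selVal (f i) ω k * (bit (ω k) - lo (pref ω k))
      with hA
    have hsum : ∑ k ∈ Finset.range n, u k = -(lam * A) := by
      have h1 : ∀ k ∈ Finset.range n, u k
          = -(lam * (selVal (f i) ω k * (bit (ω k) - lo (pref ω k)))) :=
        fun k _ => by rw [hueq k]; ring
      rw [Finset.sum_congr rfl h1, Finset.sum_neg_distrib, ← Finset.mul_sum, hA]
    rw [hsum] at hcore
    rw [le_div_iff₀ (by linarith : (0:ℝ) < Sn)]
    have h10 : lam * (-(3 * lam) * Sn) ≤ lam * A := by nlinarith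
    exact (mul_le_mul_iff_of_pos_left hlampos).mp h10
  · apply limsup_aux
    intro m
    set j := enc3 i m false with hj
    set lam := lamm m with hlamdef
    have hlampos : 0 < lam := lamm_pos m
    have hlamle : lam ≤ 1/2 := lamm_le_half m
    set C : ℝ := 2 ^ (j+1) with hC
    have hC1 : (1:ℝ) ≤ C := by
      rw [hC]; exact one_le_pow₀ one_le_two
    have hDDj : DD lo hi f j = mult (f i) lam false lo hi := by
      unfold DD; rw [hj, dec3_enc3]
    set u : ℕ → ℝ :=
      fun k => selVal (f i) ω k * (lam * (bit (ω k) - hi (pref ω k))) with hu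
    have hueq : ∀ k, u k
        = selVal (f i) ω k * (lam * (bit (ω k) - hi (pref ω k))) := fun k => rfl
    have habs : ∀ k, |u k| ≤ lam * selVal (f i) ω k := by
      intro k
      obtain ⟨hl0, hlh, hh1⟩ := hφ (pref ω k)
      obtain ⟨hb0, hb1⟩ := bit_bounds (ω k)
      have hcabs : |bit (ω k) - hi (pref ω k)| ≤ 1 :=
        abs_le.mpr ⟨by linarith, by linarith⟩
      rcases hsel01 k with h | h
      · rw [hueq k, h]; simp
      · rw [hueq k, h, one_mul, mul_one, abs_mul, abs_of_nonneg hlampos.le]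
        nlinarith
    have hmul : ∀ k, 1 + u k = mult (f i) lam false lo hi (pref ω k) (ω k) := by
      intro k
      cases hk : f i (pref ω k) <;> simp [mult, selVal, hueq k, hk]
    have hbound : ∀ n, ∏ k ∈ Finset.range n, (1 + u k) ≤ C := by
      intro n
      calc ∏ k ∈ Finset.range n, (1 + u k)
          = ∏ k ∈ Finset.range n, mult (f i) lam false lo hi (pref ω k) (ω k) :=
            Finset.prod_congr rfl fun k _ => hmul k
        _ = prodF (DD lo hi f j) (pref ω n) := by rw [prodF_pref, hDDj]
        _ ≤ C := hFb j n
    have hcore := core u (fun k => selVal (f i) ω k) lam C hC1 hlampos.le hlamle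
      hsel01 habs hbound
    have hev := hdiv.eventually_ge_atTop (max 1 (Real.log C / lam^2))
    filter_upwards [hev] with n hn
    specialize hcore n
    set Sn := ∑ k ∈ Finset.range n, selVal (f i) ω k with hSn
    have hSn1 : (1:ℝ) ≤ Sn := le_trans (le_max_left _ _) hn
    have hlog : Real.log C ≤ lam^2 * Sn := by
      have h9 : Real.log C / lam^2 ≤ Sn := le_trans (le_max_right _ _) hn
      rw [div_le_iff₀ (by positivity)] at h9
      linarith
    set B := ∑ k ∈ Finset.range n, selVal (f i) ω k * (bit (ω k) - hi (pref ω k))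
      with hB
    have hsum : ∑ k ∈ Finset.range n, u k = lam * B := by
      have h1 : ∀ k ∈ Finset.range n, u k
          = lam * (selVal (f i) ω k * (bit (ω k) - hi (pref ω k))) :=
        fun k _ => by rw [hueq k]; ring
      rw [Finset.sum_congr rfl h1, ← Finset.mul_sum, hB]
    rw [hsum] at hcore
    rw [div_le_iff₀ (by linarith : (0:ℝ) < Sn)]
    have h10 : lam * B ≤ lam * (3 * lam * Sn) := by nlinarith
    exact (mul_le_mul_iff_of_pos_left hlampos).mp h10

end St11

/-- for any forecasting system and any countable set of selection
processes there is at least one `𝒮`-random path. -/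
theorem statement_11 (lo hi : Situation → ℝ) (hφ : IsForecastingSystem lo hi)
    (𝒮 : Set (Situation → Bool)) (hc : 𝒮.Countable) :
    ∃ ω : BinPath, SSetRandom 𝒮 lo hi ω := by
  rcases Set.eq_empty_or_nonempty 𝒮 with hS | hS
  · refine ⟨fun _ => false, ?_⟩
    intro S hSmem
    rw [hS] at hSmem
    exact absurd hSmem (Set.notMem_empty S)
  · obtain ⟨f, hf⟩ := Set.Countable.exists_eq_range hc hS
    rw [hf]
    exact St11.exists_random lo hi hφ f
end

section
/- Let p, q ∈ [0,1] be any real numbers. Then every recursive temporal selection process belongs to 𝒮^{p,q}_{𝓕_C}. -/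
open Filter Classical

/-- Auxiliary boolean process: `true` exactly on `t ++ [b₀]` with `S t = true`. -/
def bumpB (S : Situation → Bool) (b₀ : Bool) : Situation → Bool :=
  fun s => cond (decide (s.reverse.head? = some b₀)) (S s.reverse.tail.reverse) false

lemma bumpB_append (S : Situation → Bool) (b₀ : Bool) (t : Situation) (x : Bool) :
    bumpB S b₀ (t ++ [x]) = cond (decide (x = b₀)) (S t) false := by
  simp [bumpB]

lemma bumpB_nil (S : Situation → Bool) (b₀ : Bool) : bumpB S b₀ [] = false := by
  simp [bumpB]

lemma bumpB_replicate (S : Situation → Bool) (b₀ : Bool) (n : ℕ) :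
    bumpB S b₀ (List.replicate n (!b₀)) = false := by
  cases n with
  | zero => simp [bumpB]
  | succ m =>
    have h : (List.replicate (m + 1) (!b₀)).reverse.head? = some (!b₀) := by
      rw [List.reverse_replicate, List.replicate_succ]; rfl
    unfold bumpB
    rw [h]
    simp

lemma bumpB_computable (S : Situation → Bool) (hS : Computable S) (b₀ : Bool) :
    Computable (bumpB S b₀) := by
  have h1 : Computable (fun s : Situation => decide (s.reverse.head? = some b₀)) :=
    (Primrec.eq.comp (Primrec.list_head?.comp Primrec.list_reverse)
      (Primrec.const (some b₀))).decide.to_comp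
  have h2 : Computable (fun s : Situation => S s.reverse.tail.reverse) :=
    hS.comp (Computable.list_reverse.comp
      (Primrec.list_tail.to_comp.comp Computable.list_reverse))
  exact Computable.cond h1 h2 (Computable.const false)

/-- The associated real test process, with values in `{1, 2}`. -/
noncomputable def bumpF (S : Situation → Bool) (b₀ : Bool) : Situation → ℝ :=
  fun s => cond (bumpB S b₀ s) 2 1

/-- for real `p, q ∈ [0,1]`, every recursive temporal selection
process belongs to `𝒮^{p,q}_{𝓕_C}`. -/
theorem statement_14 (p q : ℝ) (hp0 : 0 ≤ p) (hp1 : p ≤ 1) (hq0 : 0 ≤ q) (hq1 : q ≤ 1)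
    (S : Situation → Bool) (hS : Computable S) (ht : IsTemporal S) :
    S ∈ SelSet p q FsetC := by
  classical
  set b₀ : Bool := decide (0 < p) with hb₀
  set F := bumpF S b₀ with hF
  refine ⟨F, ?_, p, Or.inl rfl, ?_⟩
  · refine ⟨⟨fun s => cond (bumpB S b₀ s) 2 1, ?_, ?_⟩, ?_, ?_⟩
    · exact Computable.cond (bumpB_computable S hS b₀) (Computable.const 2) (Computable.const 1)
    · intro s; simp [hF, bumpF]; cases bumpB S b₀ s <;> norm_num
    · intro s; simp [hF, bumpF]; cases bumpB S b₀ s <;> norm_num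
    · simp [hF, bumpF, bumpB_nil]
  · funext s
    by_cases hs : S s = true
    · rw [hs]
      have hwit : ∃ t : Situation, t.length = s.length ∧ 0 < localE p (diffP F t) := by
        refine ⟨List.replicate s.length (!b₀), by simp, ?_⟩
        have hSt : S (List.replicate s.length (!b₀)) = true := by
          rw [ht (List.replicate s.length (!b₀)) s (by simp)]; exact hs
        have hFt : F (List.replicate s.length (!b₀)) = 1 := by
          simp [hF, bumpF, bumpB_replicate]
        have hFx : ∀ x : Bool,
            F (List.replicate s.length (!b₀) ++ [x]) = cond (decide (x = b₀)) 2 1 := by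
          intro x
          simp only [hF, bumpF, bumpB_append, hSt]
          cases decide (x = b₀) <;> rfl
        simp only [localE, diffP, hFt, hFx]
        by_cases hp : 0 < p
        · have : b₀ = true := by simp [hb₀, hp]
          rw [this]
          norm_num
          nlinarith
        · have hp' : p = 0 := le_antisymm (not_lt.mp hp) hp0
          have : b₀ = false := by simp [hb₀, hp]
          rw [this]
          norm_num [hp']
      simp [selProc, hwit]
    · have hs' : S s = false := by simpa using hs
      rw [hs']
      have hno : ¬ ∃ t : Situation, t.length = s.length ∧ 0 < localE p (diffP F t) := by
        rintro ⟨t, htl, hpos⟩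
        have hSt : S t = false := by rw [ht t s htl]; exact hs'
        have hFx : ∀ x : Bool, F (t ++ [x]) = 1 := by
          intro x
          simp only [hF, bumpF, bumpB_append, hSt]
          cases decide (x = b₀) <;> rfl
        have hFt : 1 ≤ F t := by
          simp only [hF, bumpF]; cases bumpB S b₀ t <;> norm_num
        have : localE p (diffP F t) ≤ 0 := by
          simp only [localE, diffP, hFx]
          nlinarith
        linarith
      simp [selProc, hno]
end
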